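/- arXiv:2510.20492 — 5 statements merged into one kernel-verified Lean document; each statement's English description precedes it below -/
import Mathlib

section
/- For all real constants 0 < c₀ ≤ 1 ≤ C₀ there exists a constant C₁ > 0 such that the following holds. Let ε ∈ (0,1], let G₁, G₂ ∈ [c₀, C₀], let δ ∈ [0, 1/2] with δ ≤ C₀·ε, and let K ∈ (0, C₀·ε]. Define g(s,t) := (2π·√(G₁·G₂·(1−δ²)))⁻¹ · exp( −(1/(2(1−δ²))) · ( s²/G₁ − 2δ·s·t/√(G₁·G₂) + t²/G₂ ) ) for s,t ∈ ℝ, and for a,b > 0 set p(a,b) := (a·b)^(−1/2) · g(√(2a), √(2b)) · (1 − exp(−4·√(a·b)·K)) and p̄(a,b) := K · √(2/(π·G₁))·exp(−a/G₁) · √(2/(π·G₂))·exp(−b/G₂). Then for all a, b ∈ (0, 1/ε]: | p(a,b)/p̄(a,b) − 1 | ≤ C₁ · (a·b + 1) · ε. -/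
/-- The joint Gaussian density `g(s,t)` with variances `G₁, G₂` and correlation `δ`. -/
noncomputable def gdens (G₁ G₂ δ s t : ℝ) : ℝ :=
  (2 * Real.pi * Real.sqrt (G₁ * G₂ * (1 - δ ^ 2)))⁻¹ *
    Real.exp (-(1 / (2 * (1 - δ ^ 2))) *
      (s ^ 2 / G₁ - 2 * δ * s * t / Real.sqrt (G₁ * G₂) + t ^ 2 / G₂))

/-- The density `p(a,b)`. -/
noncomputable def pdens (G₁ G₂ δ K a b : ℝ) : ℝ :=
  (a * b) ^ (-(1 : ℝ) / 2) * gdens G₁ G₂ δ (Real.sqrt (2 * a)) (Real.sqrt (2 * b)) *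
    (1 - Real.exp (-4 * Real.sqrt (a * b) * K))

/-- The product density `p̄(a,b)`. -/
noncomputable def pbar (G₁ G₂ K a b : ℝ) : ℝ :=
  K * (Real.sqrt (2 / (Real.pi * G₁)) * Real.exp (-a / G₁)) *
    (Real.sqrt (2 / (Real.pi * G₂)) * Real.exp (-b / G₂))

open Real

lemma aux_abs_exp_sub_one (x : ℝ) : |Real.exp x - 1| ≤ |x| * Real.exp |x| := by
  rcases le_or_gt 0 x with hx | hx
  · rw [abs_of_nonneg hx, abs_of_nonneg (by nlinarith [Real.add_one_le_exp x] : (0:ℝ) ≤ Real.exp x - 1)]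
    have hmul : Real.exp (-x) * Real.exp x = 1 := by rw [← Real.exp_add]; simp
    nlinarith [Real.add_one_le_exp (-x), Real.exp_pos x]
  · rw [abs_of_neg hx, abs_of_nonpos (by nlinarith [Real.exp_lt_one_iff.2 hx] : Real.exp x - 1 ≤ 0)]
    have h1 : x + 1 ≤ Real.exp x := Real.add_one_le_exp x
    have h2 : (1:ℝ) ≤ Real.exp (-x) := Real.one_le_exp (by linarith)
    nlinarith

lemma aux_one_sub_le (x : ℝ) (hx : 0 < x) : 1 - (1 - Real.exp (-x)) / x ≤ x := by
  have hmul : Real.exp (-x) * Real.exp x = 1 := by rw [← Real.exp_add]; simp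
  have h1' : Real.exp (-x) * (1 + x) ≤ 1 := by
    calc Real.exp (-x) * (1 + x) ≤ Real.exp (-x) * Real.exp x :=
      mul_le_mul_of_nonneg_left (by linarith [Real.add_one_le_exp x]) (Real.exp_pos _).le
    _ = 1 := hmul
  have h2 : -x + 1 ≤ Real.exp (-x) := by linarith [Real.add_one_le_exp (-x)]
  have h3 : (1 - x) * x ≤ 1 - Real.exp (-x) := by nlinarith [Real.exp_pos (-x)]
  have := (le_div_iff₀ hx).2 h3
  linarith

lemma aux_F_le_one (x : ℝ) (hx : 0 < x) : (1 - Real.exp (-x)) / x ≤ 1 := by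
  rw [div_le_one hx]
  linarith [Real.add_one_le_exp (-x)]

lemma aux_F_nonneg (x : ℝ) (hx : 0 < x) : 0 ≤ (1 - Real.exp (-x)) / x := by
  apply div_nonneg _ hx.le
  have h : Real.exp (-x) ≤ Real.exp 0 := Real.exp_le_exp.2 (by linarith)
  rw [Real.exp_zero] at h
  linarith

lemma aux_ident (G₁ G₂ δ K a b : ℝ) (hG₁ : 0 < G₁) (hG₂ : 0 < G₂)
    (hδ1 : δ^2 < 1) (hK : 0 < K) (ha : 0 < a) (hb : 0 < b) :
    pdens G₁ G₂ δ K a b = pbar G₁ G₂ K a b *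
      ((1 - Real.exp (-4 * (Real.sqrt a * Real.sqrt b) * K)) / (4 * (Real.sqrt a * Real.sqrt b) * K) *
        (Real.sqrt (1 - δ^2))⁻¹ *
        Real.exp (-(δ^2/(1-δ^2)) * (a/G₁ + b/G₂) +
          2*δ*(Real.sqrt a * Real.sqrt b)/((1-δ^2)*(Real.sqrt G₁ * Real.sqrt G₂)))) := by
  have hu : 0 < 1 - δ^2 := by linarith
  have hπ : (0:ℝ) < π := Real.pi_pos
  have hra : Real.sqrt a ^ 2 = a := Real.sq_sqrt ha.le
  have hrb : Real.sqrt b ^ 2 = b := Real.sq_sqrt hb.le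
  have hr1 : Real.sqrt G₁ ^ 2 = G₁ := Real.sq_sqrt hG₁.le
  have hr2 : Real.sqrt G₂ ^ 2 = G₂ := Real.sq_sqrt hG₂.le
  have hrd : Real.sqrt (1-δ^2) ^ 2 = 1-δ^2 := Real.sq_sqrt hu.le
  have h2 : Real.sqrt 2 ^ 2 = 2 := Real.sq_sqrt (by norm_num)
  have hra0 : 0 < Real.sqrt a := Real.sqrt_pos.2 ha
  have hrb0 : 0 < Real.sqrt b := Real.sqrt_pos.2 hb
  have hr10 : 0 < Real.sqrt G₁ := Real.sqrt_pos.2 hG₁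
  have hr20 : 0 < Real.sqrt G₂ := Real.sqrt_pos.2 hG₂
  have hrd0 : 0 < Real.sqrt (1-δ^2) := Real.sqrt_pos.2 hu
  have hq : Real.sqrt (2/(π*G₁)) * Real.sqrt (2/(π*G₂))
      = 2/(π*(Real.sqrt G₁*Real.sqrt G₂)) := by
    rw [← Real.sqrt_mul (by positivity)]
    rw [show (2/(π*G₁)) * (2/(π*G₂)) = (2/(π*(Real.sqrt G₁*Real.sqrt G₂)))^2 by
      rw [div_pow, mul_pow, mul_pow, hr1, hr2]; field_simp]
    exact Real.sqrt_sq (by positivity)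
  have hpbar : pbar G₁ G₂ K a b
      = K * (2/(π*(Real.sqrt G₁*Real.sqrt G₂))) * (Real.exp (-a/G₁) * Real.exp (-b/G₂)) := by
    rw [pbar, ← hq]; ring
  have h1 : (a*b) ^ (-(1:ℝ)/2) = (Real.sqrt a * Real.sqrt b)⁻¹ := by
    rw [neg_div, Real.rpow_neg (by positivity), ← Real.sqrt_eq_rpow, Real.sqrt_mul ha.le]
  rw [hpbar, pdens, gdens, h1,
    Real.sqrt_mul (by positivity : (0:ℝ) ≤ G₁*G₂) (1-δ^2),
    Real.sqrt_mul hG₁.le G₂,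
    Real.sqrt_mul ha.le b,
    Real.sqrt_mul (by norm_num : (0:ℝ) ≤ 2) a,
    Real.sqrt_mul (by norm_num : (0:ℝ) ≤ 2) b]
  have hexp : -(1 / (2 * (1 - δ ^ 2))) *
      ((Real.sqrt 2 * Real.sqrt a) ^ 2 / G₁ -
        2 * δ * (Real.sqrt 2 * Real.sqrt a) * (Real.sqrt 2 * Real.sqrt b) /
          (Real.sqrt G₁ * Real.sqrt G₂) +
        (Real.sqrt 2 * Real.sqrt b) ^ 2 / G₂)
      = -a/G₁ + (-b/G₂ + (-(δ^2/(1-δ^2)) * (a/G₁ + b/G₂) +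
          2*δ*(Real.sqrt a * Real.sqrt b)/((1-δ^2)*(Real.sqrt G₁ * Real.sqrt G₂)))) := by
    rw [mul_pow, mul_pow, h2, hra, hrb]
    rw [show 2 * δ * (Real.sqrt 2 * Real.sqrt a) * (Real.sqrt 2 * Real.sqrt b)
        = 4 * (δ * (Real.sqrt a * Real.sqrt b)) by
      linear_combination (2 * δ * (Real.sqrt a * Real.sqrt b)) * h2]
    field_simp
    ring
  rw [hexp, Real.exp_add, Real.exp_add]
  field_simp
  ring

lemma aux_one_le_of_sq (y : ℝ) (h0 : 0 < y) (h2 : 1 ≤ y^2) : 1 ≤ y := by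
  nlinarith

lemma aux_inv_le_of_one_le_mul (y c : ℝ) (h0 : 0 < y) (h : 1 ≤ y * c) : y⁻¹ ≤ c := by
  rw [← one_div, div_le_iff₀ h0]
  linarith

lemma aux_one_le_inv (y : ℝ) (h0 : 0 < y) (h : y ≤ 1) : 1 ≤ y⁻¹ := by
  rw [← one_div, le_div_iff₀ h0]
  linarith

lemma aux_combine (F D e t u v : ℝ) (hF0 : 0 ≤ F) (hF1 : F ≤ 1) (hFd : 1 - F ≤ u)
    (hD1 : 1 ≤ D) (hD2 : D ≤ 2) (hDd : D - 1 ≤ v) (he : |e - 1| ≤ t) :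
    |F * D * e - 1| ≤ 2*t + v + u := by
  have hFD : F * D ≤ 2 := by nlinarith
  have hFDnn : 0 ≤ F * D := by nlinarith
  have h1 : |F*D*(e-1)| ≤ 2*t := by
    rw [abs_mul, abs_of_nonneg hFDnn]
    exact mul_le_mul hFD he (abs_nonneg _) (by norm_num)
  have h2 : F*D*e - 1 = F*D*(e-1) + (F*(D-1) + (F-1)) := by ring
  have hv0 : 0 ≤ v := by linarith
  have h3 : |F*(D-1) + (F-1)| ≤ v + u := by
    rw [abs_le]
    constructor
    · nlinarith [mul_nonneg hF0 (by linarith : (0:ℝ) ≤ D-1)]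
    · nlinarith [mul_nonneg hF0 (by linarith : (0:ℝ) ≤ D-1)]
  calc |F*D*e - 1| = |F*D*(e-1) + (F*(D-1)+(F-1))| := by rw [h2]
    _ ≤ |F*D*(e-1)| + |F*(D-1)+(F-1)| := abs_add_le _ _
    _ ≤ 2*t + (v+u) := add_le_add h1 h3
    _ = 2*t + v + u := by ring

set_option maxHeartbeats 2000000 in
theorem stmt0 (c₀ C₀ : ℝ) (hc₀pos : 0 < c₀) (hc₀le : c₀ ≤ 1) (hC₀ : 1 ≤ C₀) :
    ∃ C₁ : ℝ, 0 < C₁ ∧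
      ∀ ε G₁ G₂ δ K : ℝ,
        0 < ε → ε ≤ 1 →
        c₀ ≤ G₁ → G₁ ≤ C₀ → c₀ ≤ G₂ → G₂ ≤ C₀ →
        0 ≤ δ → δ ≤ 1 / 2 → δ ≤ C₀ * ε →
        0 < K → K ≤ C₀ * ε →
        ∀ a b : ℝ, 0 < a → a ≤ 1 / ε → 0 < b → b ≤ 1 / ε →
          |pdens G₁ G₂ δ K a b / pbar G₁ G₂ K a b - 1| ≤ C₁ * (a * b + 1) * ε := by
  obtain ⟨M, hMdef⟩ : ∃ M : ℝ, M = 8 * (C₀^2 + C₀) * c₀⁻¹ := ⟨_, rfl⟩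
  have hMpos : 0 < M := by rw [hMdef]; positivity
  refine ⟨Real.exp M * (2*M + 2*C₀^2 + 8*C₀) + 1, by positivity, ?_⟩
  intro ε G₁ G₂ δ K hε hε1 hG₁l hG₁u hG₂l hG₂u hδ0 hδhalf hδε hK hKε a b ha haε hb hbε
  have hG₁pos : 0 < G₁ := lt_of_lt_of_le hc₀pos hG₁l
  have hG₂pos : 0 < G₂ := lt_of_lt_of_le hc₀pos hG₂l
  have hδ1 : δ^2 < 1 := by nlinarith
  have hu : (0:ℝ) < 1 - δ^2 := by linarith
  have hu34 : (3/4:ℝ) ≤ 1 - δ^2 := by nlinarith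
  have hπ : (0:ℝ) < π := Real.pi_pos
  have hεa : ε * a ≤ 1 := by
    have := (le_div_iff₀ hε).1 haε; linarith
  have hεb : ε * b ≤ 1 := by
    have := (le_div_iff₀ hε).1 hbε; linarith
  have hra0 : 0 < Real.sqrt a := Real.sqrt_pos.2 ha
  have hrb0 : 0 < Real.sqrt b := Real.sqrt_pos.2 hb
  have hr10 : 0 < Real.sqrt G₁ := Real.sqrt_pos.2 hG₁pos
  have hr20 : 0 < Real.sqrt G₂ := Real.sqrt_pos.2 hG₂pos
  have hrd0 : 0 < Real.sqrt (1-δ^2) := Real.sqrt_pos.2 hu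
  have hrd_sq : Real.sqrt (1-δ^2) ^ 2 = 1-δ^2 := Real.sq_sqrt hu.le
  have hrd_le1 : Real.sqrt (1-δ^2) ≤ 1 := Real.sqrt_le_one.2 (by linarith [sq_nonneg δ])
  have hab1 : (1:ℝ) ≤ a*b + 1 := by linarith [mul_pos ha hb]
  have ht14 : δ^2 ≤ 1/4 := by
    linarith [mul_le_mul hδhalf hδhalf hδ0 (by norm_num : (0:ℝ) ≤ 1/2)]
  have hrd_half : (1/2:ℝ) ≤ Real.sqrt (1-δ^2) := by
    apply (Real.le_sqrt' (by norm_num)).2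
    linarith
  have hD1 : 1 ≤ (Real.sqrt (1-δ^2))⁻¹ := aux_one_le_inv _ hrd0 hrd_le1
  have hD2 : (Real.sqrt (1-δ^2))⁻¹ ≤ 2 :=
    aux_inv_le_of_one_le_mul _ _ hrd0 (by linarith)
  have hy2 : 1 ≤ (Real.sqrt (1-δ^2)*(1+2*δ^2))^2 := by
    rw [mul_pow, hrd_sq]
    linarith [mul_nonneg (sq_nonneg δ) (sub_nonneg.2 ht14),
      mul_nonneg (mul_nonneg (sq_nonneg δ) (sq_nonneg δ)) (sub_nonneg.2 ht14), sq_nonneg δ]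
  have hkey : 1 ≤ Real.sqrt (1-δ^2) * (1+2*δ^2) :=
    aux_one_le_of_sq _ (by positivity) hy2
  have hDd : (Real.sqrt (1-δ^2))⁻¹ - 1 ≤ 2*δ^2 := by
    linarith [aux_inv_le_of_one_le_mul _ _ hrd0 hkey]
  -- s = √a√b bounds
  have hs_ab : Real.sqrt a * Real.sqrt b ≤ a*b + 1 := by
    rw [← Real.sqrt_mul ha.le]
    rcases le_total (a*b) 1 with h | h
    · have h1 : Real.sqrt (a*b) ≤ 1 := Real.sqrt_le_one.2 h
      linarith [mul_pos ha hb]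
    · have h1 : Real.sqrt (a*b) ≤ a*b := by
        calc Real.sqrt (a*b) ≤ Real.sqrt ((a*b)^2) := by
              apply Real.sqrt_le_sqrt
              linarith [mul_le_mul_of_nonneg_left h (by positivity : (0:ℝ) ≤ a*b)]
          _ = a*b := Real.sqrt_sq (by positivity)
      linarith
  have hs_eps : ε * (Real.sqrt a * Real.sqrt b) ≤ 1 := by
    have h1 : Real.sqrt a * Real.sqrt b ≤ 1/ε := by
      rw [← Real.sqrt_mul ha.le]
      calc Real.sqrt (a*b) ≤ Real.sqrt ((1/ε)*(1/ε)) :=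
        Real.sqrt_le_sqrt (by linarith [mul_le_mul haε hbε hb.le (by positivity : (0:ℝ) ≤ 1/ε)])
      _ = 1/ε := Real.sqrt_mul_self (by positivity)
    have := (le_div_iff₀ hε).1 h1
    linarith
  have hc₀inv : (0:ℝ) < c₀⁻¹ := by positivity
  have hw : c₀ ≤ Real.sqrt G₁ * Real.sqrt G₂ := by
    have h1 : Real.sqrt c₀ ≤ Real.sqrt G₁ := Real.sqrt_le_sqrt hG₁l
    have h2 : Real.sqrt c₀ ≤ Real.sqrt G₂ := Real.sqrt_le_sqrt hG₂l
    have h3 : Real.sqrt c₀ * Real.sqrt c₀ = c₀ := Real.mul_self_sqrt hc₀pos.le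
    linarith [mul_le_mul h1 h2 (Real.sqrt_nonneg c₀) (Real.sqrt_nonneg G₁)]
  have hδsq : δ^2 ≤ C₀^2 * ε^2 := by
    linarith [mul_le_mul hδε hδε hδ0 (by positivity : (0:ℝ) ≤ C₀*ε)]
  have hkey1 : δ^2 * (a+b) ≤ 2*C₀^2*ε := by
    linarith [mul_nonneg (mul_nonneg (sq_nonneg C₀) hε.le) (sub_nonneg.2 hεa),
      mul_nonneg (mul_nonneg (sq_nonneg C₀) hε.le) (sub_nonneg.2 hεb),
      mul_nonneg (sub_nonneg.2 hδsq) (by positivity : (0:ℝ) ≤ a+b)]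
  -- T1 bound
  have hE_T1 : δ^2/(1-δ^2)*(a/G₁+b/G₂) ≤ M*ε := by
    have e1 : δ^2/(1-δ^2) ≤ (4/3)*δ^2 := by
      rw [div_le_iff₀ hu]
      linarith [mul_nonneg (sq_nonneg δ) (by linarith : (0:ℝ) ≤ 1 - δ^2 - 3/4)]
    have i1 : G₁⁻¹ ≤ c₀⁻¹ := inv_anti₀ hc₀pos hG₁l
    have i2 : G₂⁻¹ ≤ c₀⁻¹ := inv_anti₀ hc₀pos hG₂l
    have e2 : a/G₁+b/G₂ ≤ (a+b)*c₀⁻¹ := by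
      rw [div_eq_mul_inv, div_eq_mul_inv]
      linarith [mul_le_mul_of_nonneg_left i1 ha.le, mul_le_mul_of_nonneg_left i2 hb.le]
    have e0 : (0:ℝ) ≤ a/G₁+b/G₂ := by positivity
    calc δ^2/(1-δ^2)*(a/G₁+b/G₂) ≤ ((4/3)*δ^2)*((a+b)*c₀⁻¹) :=
        mul_le_mul e1 e2 e0 (by positivity)
      _ ≤ M*ε := by
        rw [hMdef]
        linarith [mul_nonneg (sub_nonneg.2 hkey1) hc₀inv.le,
          mul_nonneg (mul_nonneg (by positivity : (0:ℝ) ≤ C₀^2) hε.le) hc₀inv.le,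
          mul_nonneg (mul_nonneg (by positivity : (0:ℝ) ≤ C₀) hε.le) hc₀inv.le]
  -- T2 bounds
  have huwpos : 0 < (1-δ^2)*(Real.sqrt G₁*Real.sqrt G₂) := by positivity
  have huw : (3/4)*c₀ ≤ (1-δ^2)*(Real.sqrt G₁*Real.sqrt G₂) := by
    linarith [mul_nonneg (by linarith : (0:ℝ) ≤ 1 - δ^2 - 3/4) (mul_pos hr10 hr20).le, hw]
  have huwinv : ((1-δ^2)*(Real.sqrt G₁*Real.sqrt G₂))⁻¹ ≤ (4/3)*c₀⁻¹ := by
    calc ((1-δ^2)*(Real.sqrt G₁*Real.sqrt G₂))⁻¹ ≤ ((3/4)*c₀)⁻¹ :=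
        inv_anti₀ (by positivity) huw
      _ = (4/3)*c₀⁻¹ := by rw [mul_inv]; norm_num
  have hT2' : 2*δ*(Real.sqrt a*Real.sqrt b)/((1-δ^2)*(Real.sqrt G₁*Real.sqrt G₂))
      ≤ (8/3)*(δ*(Real.sqrt a*Real.sqrt b))*c₀⁻¹ := by
    rw [div_eq_mul_inv]
    linarith [mul_le_mul_of_nonneg_left huwinv
      (by positivity : (0:ℝ) ≤ 2*δ*(Real.sqrt a*Real.sqrt b))]
  have hδs1 : δ*(Real.sqrt a*Real.sqrt b) ≤ C₀ := by
    linarith [mul_nonneg (sub_nonneg.2 hδε) (mul_pos hra0 hrb0).le,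
      mul_nonneg (by positivity : (0:ℝ) ≤ C₀) (sub_nonneg.2 hs_eps)]
  have hδs2 : δ*(Real.sqrt a*Real.sqrt b) ≤ C₀*ε*(a*b+1) := by
    linarith [mul_nonneg (sub_nonneg.2 hδε) (mul_pos hra0 hrb0).le,
      mul_nonneg (mul_nonneg (by positivity : (0:ℝ) ≤ C₀) hε.le) (sub_nonneg.2 hs_ab)]
  have hE_T2M : 2*δ*(Real.sqrt a*Real.sqrt b)/((1-δ^2)*(Real.sqrt G₁*Real.sqrt G₂)) ≤ M := by
    refine hT2'.trans ?_
    rw [hMdef]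
    linarith [mul_nonneg (sub_nonneg.2 hδs1) hc₀inv.le,
      mul_nonneg (mul_nonneg (by positivity : (0:ℝ) ≤ C₀) (by norm_num : (0:ℝ) ≤ 1)) hc₀inv.le,
      mul_nonneg (by positivity : (0:ℝ) ≤ C₀^2) hc₀inv.le,
      mul_nonneg (by positivity : (0:ℝ) ≤ C₀) hc₀inv.le]
  have hE_T2ab : 2*δ*(Real.sqrt a*Real.sqrt b)/((1-δ^2)*(Real.sqrt G₁*Real.sqrt G₂))
      ≤ M*((a*b+1)*ε) := by
    refine hT2'.trans ?_
    rw [hMdef]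
    linarith [mul_nonneg (sub_nonneg.2 hδs2) hc₀inv.le,
      mul_nonneg (mul_nonneg (by positivity : (0:ℝ) ≤ C₀^2) (mul_nonneg (by positivity : (0:ℝ) ≤ a*b+1) hε.le)) hc₀inv.le,
      mul_nonneg (mul_nonneg (by positivity : (0:ℝ) ≤ C₀) (mul_nonneg (by positivity : (0:ℝ) ≤ a*b+1) hε.le)) hc₀inv.le]
  have hT1nn : (0:ℝ) ≤ δ^2/(1-δ^2)*(a/G₁+b/G₂) := by positivity
  have hT2nn : (0:ℝ) ≤ 2*δ*(Real.sqrt a*Real.sqrt b)/((1-δ^2)*(Real.sqrt G₁*Real.sqrt G₂)) := by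
    positivity
  have hMε : M*ε ≤ M := by
    linarith [mul_nonneg hMpos.le (sub_nonneg.2 hε1)]
  have hMεab : M*ε ≤ M*((a*b+1)*ε) := by
    linarith [mul_nonneg (mul_nonneg hMpos.le (mul_pos ha hb).le) hε.le]
  have hEabs1 : |(-(δ^2/(1-δ^2)) * (a/G₁ + b/G₂) +
      2*δ*(Real.sqrt a * Real.sqrt b)/((1-δ^2)*(Real.sqrt G₁ * Real.sqrt G₂)))| ≤ M := by
    rw [abs_le]
    constructor
    · linarith [hE_T1, hT2nn, hMε]
    · linarith [hE_T2M, hT1nn]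
  have hEabs2 : |(-(δ^2/(1-δ^2)) * (a/G₁ + b/G₂) +
      2*δ*(Real.sqrt a * Real.sqrt b)/((1-δ^2)*(Real.sqrt G₁ * Real.sqrt G₂)))|
      ≤ M*((a*b+1)*ε) := by
    rw [abs_le]
    constructor
    · linarith [hE_T1, hT2nn, hMε, hMεab]
    · linarith [hE_T2ab, hT1nn]
  have heE1 : |Real.exp (-(δ^2/(1-δ^2)) * (a/G₁ + b/G₂) +
      2*δ*(Real.sqrt a * Real.sqrt b)/((1-δ^2)*(Real.sqrt G₁ * Real.sqrt G₂))) - 1|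
      ≤ M*((a*b+1)*ε) * Real.exp M := by
    refine (aux_abs_exp_sub_one _).trans ?_
    exact mul_le_mul hEabs2 (Real.exp_le_exp.2 hEabs1) (Real.exp_pos _).le (by positivity)
  -- pbar positive
  have hq1 : 0 < Real.sqrt (2/(π*G₁)) := Real.sqrt_pos.2 (by positivity)
  have hq2 : 0 < Real.sqrt (2/(π*G₂)) := Real.sqrt_pos.2 (by positivity)
  have hpbar_pos : 0 < pbar G₁ G₂ K a b := by
    rw [pbar]
    exact mul_pos (mul_pos hK (mul_pos hq1 (Real.exp_pos _))) (mul_pos hq2 (Real.exp_pos _))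
  have hx : 0 < 4*(Real.sqrt a*Real.sqrt b)*K := by positivity
  have hF0 := aux_F_nonneg _ hx
  have hF1 := aux_F_le_one _ hx
  have hFd := aux_one_sub_le _ hx
  have hxb : 4*(Real.sqrt a*Real.sqrt b)*K ≤ 4*C₀*((a*b+1)*ε) := by
    linarith [mul_nonneg (sub_nonneg.2 hKε) (mul_pos hra0 hrb0).le,
      mul_nonneg (mul_nonneg (by positivity : (0:ℝ) ≤ C₀) hε.le) (sub_nonneg.2 hs_ab)]
  rw [aux_ident G₁ G₂ δ K a b hG₁pos hG₂pos hδ1 hK ha hb,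
    mul_comm (pbar G₁ G₂ K a b), mul_div_assoc, div_self (ne_of_gt hpbar_pos), mul_one,
    show (-4*(Real.sqrt a*Real.sqrt b)*K : ℝ) = -(4*(Real.sqrt a*Real.sqrt b)*K) from by ring]
  refine le_trans (aux_combine _ _ _ (M*((a*b+1)*ε)*Real.exp M) (4*C₀*((a*b+1)*ε)) (2*δ^2)
    hF0 hF1 (hFd.trans hxb) hD1 hD2 hDd heE1) ?_
  have hexp1 : 1 ≤ Real.exp M := Real.one_le_exp hMpos.le
  have hP : (0:ℝ) ≤ (a*b+1)*ε := by positivity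
  linarith [hδsq, hP,
    mul_nonneg (mul_nonneg (sub_nonneg.2 hexp1) hP) (by positivity : (0:ℝ) ≤ C₀^2),
    mul_nonneg (mul_nonneg (sub_nonneg.2 hexp1) hP) (by positivity : (0:ℝ) ≤ C₀),
    mul_nonneg (by positivity : (0:ℝ) ≤ C₀^2) (mul_nonneg (mul_pos ha hb).le hε.le),
    mul_nonneg (mul_nonneg (by positivity : (0:ℝ) ≤ C₀^2) hε.le) (sub_nonneg.2 hε1),
    mul_nonneg (by positivity : (0:ℝ) ≤ C₀) hP]
end

section
/- For all real λ ∈ (0, 1] and q ∈ [0, 1]: q / cosh 1 ≤ ( sinh λ − sinh(λ·(1−q)) ) / sinh λ ≤ q · cosh 1. Equivalently, 1 − sinh(λ·(1−q))/sinh λ is bounded above and below by constant multiples of q, uniformly for λ ∈ (0,1]. -/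
open Real

lemma sinh_sub_self_mono : Monotone (fun x : ℝ => Real.sinh x - x) := by
  have : ∀ x : ℝ, HasDerivAt (fun x : ℝ => Real.sinh x - x) (Real.cosh x - 1) x := by
    intro x
    exact (Real.hasDerivAt_sinh x).sub (hasDerivAt_id' x)
  exact monotone_of_deriv_nonneg
    (fun x => (this x).differentiableAt)
    (fun x => by rw [(this x).deriv]; linarith [Real.one_le_cosh x])

lemma cosh_mul_sub_sinh_mono : MonotoneOn (fun x : ℝ => Real.cosh 1 * x - Real.sinh x)
    (Set.Icc (0 : ℝ) 1) := by
  have hd : ∀ x : ℝ, HasDerivAt (fun x : ℝ => Real.cosh 1 * x - Real.sinh x)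
      (Real.cosh 1 - Real.cosh x) x := by
    intro x
    have h := ((hasDerivAt_id' x).const_mul (Real.cosh 1)).sub (Real.hasDerivAt_sinh x)
    rw [mul_one] at h
    exact h
  apply monotoneOn_of_deriv_nonneg (convex_Icc 0 1)
  · exact (Continuous.continuousOn (by continuity))
  · intro x hx
    exact ((hd x).differentiableAt).differentiableWithinAt
  · intro x hx
    rw [interior_Icc] at hx
    rw [(hd x).deriv]
    have : Real.cosh x ≤ Real.cosh 1 := by
      rw [Real.cosh_le_cosh]
      rw [abs_of_nonneg (le_of_lt hx.1), abs_one]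
      exact le_of_lt hx.2
    linarith

theorem stmt3 (lam q : ℝ) (hlam0 : 0 < lam) (hlam1 : lam ≤ 1) (hq0 : 0 ≤ q) (hq1 : q ≤ 1) :
    q / Real.cosh 1 ≤ (Real.sinh lam - Real.sinh (lam * (1 - q))) / Real.sinh lam ∧
      (Real.sinh lam - Real.sinh (lam * (1 - q))) / Real.sinh lam ≤ q * Real.cosh 1 := by
  set b := lam * (1 - q) with hb
  have hb0 : 0 ≤ b := mul_nonneg hlam0.le (by linarith)
  have hba : b ≤ lam := by nlinarith
  have hab : lam - b = lam * q := by ring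
  have hsinh_pos : 0 < Real.sinh lam := Real.sinh_pos_iff.mpr hlam0
  have hcosh_pos : (0 : ℝ) < Real.cosh 1 := Real.cosh_pos 1
  -- lower bound on numerator: sinh lam - sinh b ≥ lam - b
  have hnum_lo : lam * q ≤ Real.sinh lam - Real.sinh b := by
    have := sinh_sub_self_mono hba
    simp only at this
    linarith
  -- upper bound on numerator
  have hnum_hi : Real.sinh lam - Real.sinh b ≤ lam * q * Real.cosh 1 := by
    have := cosh_mul_sub_sinh_mono ⟨hb0, hba.trans hlam1⟩ ⟨hlam0.le, hlam1⟩ hba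
    simp only at this
    nlinarith
  -- bounds on sinh lam
  have hsl_lo : lam ≤ Real.sinh lam := Real.self_le_sinh_iff.mpr hlam0.le
  have hsl_hi : Real.sinh lam ≤ lam * Real.cosh 1 := by
    have := cosh_mul_sub_sinh_mono (Set.left_mem_Icc.mpr zero_le_one) ⟨hlam0.le, hlam1⟩ hlam0.le
    simp only [mul_zero, Real.sinh_zero, sub_zero] at this
    linarith [this]
  constructor
  · have h1 : lam * q / (lam * Real.cosh 1) ≤ (Real.sinh lam - Real.sinh b) / Real.sinh lam :=
      div_le_div₀ (by linarith) hnum_lo hsinh_pos hsl_hi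
    rwa [mul_div_mul_left _ _ (ne_of_gt hlam0)] at h1
  · have h1 : (Real.sinh lam - Real.sinh b) / Real.sinh lam ≤ lam * q * Real.cosh 1 / lam :=
      div_le_div₀ (by positivity) hnum_hi hlam0 hsl_lo
    rwa [mul_comm lam q, mul_assoc, mul_div_assoc, mul_div_cancel_left₀ _ (ne_of_gt hlam0)] at h1
end

section
/- Let A ≥ 1 be a real number and let h : ℝ → ℝ be a measurable function such that 0 ≤ h(χ) ≤ A·√χ for all χ ∈ (0, 1], and such that h(χ) ≤ A·χ^(3/2)·( 1 + ∫_{t ∈ [1, 3/χ]} h(1/t) dt ) for all χ ∈ (0, 1]. Then there exists C > 0, depending only on A, such that h(χ) ≤ C·χ^(3/2) for all χ ∈ (0, 1]. -/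
open MeasureTheory

lemma aux_rpow_int (b α : ℝ) (hb : 1 ≤ b) (hα : α ≠ 1) :
    ∫ t in Set.Icc (1:ℝ) b, t ^ (-α) = (b ^ (1 - α) - 1) / (1 - α) := by
  rw [MeasureTheory.integral_Icc_eq_integral_Ioc, ← intervalIntegral.integral_of_le hb,
    integral_rpow (Or.inr ⟨fun hc => hα (by linarith [neg_injective hc]),
      Set.notMem_uIcc_of_lt one_pos (lt_of_lt_of_le one_pos hb)⟩)]
  have h1 : -α + 1 = 1 - α := by ring
  rw [h1, Real.one_rpow]

lemma aux_mono (h : ℝ → ℝ) (hm : Measurable h) (A : ℝ) (hA : 1 ≤ A)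
    (h0 : ∀ χ ∈ Set.Ioc (0:ℝ) 1, 0 ≤ h χ ∧ h χ ≤ A * Real.sqrt χ)
    (B α b : ℝ) (hB : 0 ≤ B) (hb : 1 ≤ b) (hα : α ≠ 1)
    (hbd : ∀ χ ∈ Set.Ioc (0:ℝ) 1, h χ ≤ B * χ ^ α) :
    ∫ t in Set.Icc (1:ℝ) b, h (1/t) ≤ B * ((b ^ (1 - α) - 1) / (1 - α)) := by
  have key : ∀ t ∈ Set.Icc (1:ℝ) b, h (1/t) ≤ B * t ^ (-α) := by
    intro t ht
    have ht0 : (0:ℝ) < t := lt_of_lt_of_le one_pos ht.1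
    have hmem : 1/t ∈ Set.Ioc (0:ℝ) 1 := ⟨by positivity, by rw [div_le_one ht0]; exact ht.1⟩
    calc h (1/t) ≤ B * (1/t) ^ α := hbd _ hmem
      _ = B * t ^ (-α) := by
          rw [one_div, Real.inv_rpow ht0.le, ← Real.rpow_neg ht0.le]
  have i1 : IntegrableOn (fun t => h (1/t)) (Set.Icc (1:ℝ) b) := by
    apply Measure.integrableOn_of_bounded (M := A)
    · simp [Real.volume_Icc]
    · exact (hm.comp (measurable_const.div measurable_id)).aestronglyMeasurable
    · filter_upwards [ae_restrict_mem measurableSet_Icc] with t ht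
      have ht0 : (0:ℝ) < t := lt_of_lt_of_le one_pos ht.1
      have hmem : 1/t ∈ Set.Ioc (0:ℝ) 1 := ⟨by positivity, by rw [div_le_one ht0]; exact ht.1⟩
      obtain ⟨hp, hu⟩ := h0 _ hmem
      rw [Real.norm_eq_abs, abs_of_nonneg hp]
      have : Real.sqrt (1/t) ≤ 1 := Real.sqrt_le_one.mpr hmem.2
      nlinarith
  have i2 : IntegrableOn (fun t => B * t ^ (-α)) (Set.Icc (1:ℝ) b) := by
    apply ContinuousOn.integrableOn_Icc
    exact continuousOn_const.mul (ContinuousOn.rpow_const continuousOn_id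
      (fun x hx => Or.inl (ne_of_gt (lt_of_lt_of_le one_pos hx.1))))
  calc ∫ t in Set.Icc (1:ℝ) b, h (1/t) ≤ ∫ t in Set.Icc (1:ℝ) b, B * t ^ (-α) :=
        setIntegral_mono_on i1 i2 measurableSet_Icc key
    _ = B * ∫ t in Set.Icc (1:ℝ) b, t ^ (-α) := by rw [integral_const_mul]
    _ = B * ((b ^ (1 - α) - 1) / (1 - α)) := by rw [aux_rpow_int b α hb hα]

lemma boot (A : ℝ) (hA : 1 ≤ A) (h : ℝ → ℝ) (hm : Measurable h)
    (h0 : ∀ χ ∈ Set.Ioc (0:ℝ) 1, 0 ≤ h χ ∧ h χ ≤ A * Real.sqrt χ)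
    (hfun : ∀ χ ∈ Set.Ioc (0:ℝ) 1,
      h χ ≤ A * χ ^ ((3:ℝ)/2) * (1 + ∫ t in Set.Icc (1:ℝ) (3/χ), h (1/t)))
    (B α : ℝ) (hB : 0 ≤ B) (hα1 : (0:ℝ) < α) (hα2 : α < 1)
    (hbd : ∀ χ ∈ Set.Ioc (0:ℝ) 1, h χ ≤ B * χ ^ α) :
    ∀ χ ∈ Set.Ioc (0:ℝ) 1, h χ ≤ (A + 3*A*B/(1-α)) * χ ^ (α + 1/2) := by
  intro χ hχ
  obtain ⟨hχ0, hχ1⟩ := hχ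
  have hb : (1:ℝ) ≤ 3/χ := by rw [le_div_iff₀ hχ0]; linarith
  have hI := aux_mono h hm A hA h0 B α (3/χ) hB hb (ne_of_lt hα2) hbd
  have hχp : (0:ℝ) < χ ^ (1-α) := Real.rpow_pos_of_pos hχ0 _
  have hχm : (0:ℝ) < χ ^ (α-1) := Real.rpow_pos_of_pos hχ0 _
  have e3 : (3/χ) ^ (1-α) ≤ 3 * χ ^ (α-1) := by
    rw [Real.div_rpow (by norm_num) hχ0.le]
    have e2 : (3:ℝ) ^ (1-α) ≤ 3 := by
      nth_rewrite 2 [show (3:ℝ) = 3 ^ (1:ℝ) by rw [Real.rpow_one]]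
      exact Real.rpow_le_rpow_of_exponent_le (by norm_num) (by linarith)
    have einv : χ ^ (α-1) = (χ ^ (1-α))⁻¹ := by
      rw [← Real.rpow_neg hχ0.le, neg_sub]
    rw [einv, div_eq_mul_inv]
    exact mul_le_mul_of_nonneg_right e2 (by positivity)
  have h1α : (0:ℝ) < 1 - α := by linarith
  have hIb : ∫ t in Set.Icc (1:ℝ) (3/χ), h (1/t) ≤ 3*B/(1-α) * χ ^ (α-1) := by
    calc ∫ t in Set.Icc (1:ℝ) (3/χ), h (1/t)
        ≤ B * (((3/χ) ^ (1-α) - 1) / (1-α)) := hI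
      _ ≤ B * ((3 * χ ^ (α-1)) / (1-α)) := by gcongr; linarith
      _ = 3*B/(1-α) * χ ^ (α-1) := by ring
  have hx32 : (0:ℝ) < χ ^ ((3:ℝ)/2) := Real.rpow_pos_of_pos hχ0 _
  have hxa : (0:ℝ) < χ ^ (α + 1/2) := Real.rpow_pos_of_pos hχ0 _
  have emul : χ ^ ((3:ℝ)/2) * χ ^ (α-1) = χ ^ (α + 1/2) := by
    rw [← Real.rpow_add hχ0]; norm_num; ring_nf
  have ele : χ ^ ((3:ℝ)/2) ≤ χ ^ (α + 1/2) :=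
    Real.rpow_le_rpow_of_exponent_ge hχ0 hχ1 (by linarith)
  calc h χ ≤ A * χ ^ ((3:ℝ)/2) * (1 + ∫ t in Set.Icc (1:ℝ) (3/χ), h (1/t)) :=
        hfun χ ⟨hχ0, hχ1⟩
    _ ≤ A * χ ^ ((3:ℝ)/2) * (1 + 3*B/(1-α) * χ ^ (α-1)) := by
        have hApos : (0:ℝ) < A := lt_of_lt_of_le one_pos hA
        have : (0:ℝ) < A * χ ^ ((3:ℝ)/2) := by positivity
        nlinarith
    _ = A * χ ^ ((3:ℝ)/2) + 3*A*B/(1-α) * (χ ^ ((3:ℝ)/2) * χ ^ (α-1)) := by ring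
    _ = A * χ ^ ((3:ℝ)/2) + 3*A*B/(1-α) * χ ^ (α + 1/2) := by rw [emul]
    _ ≤ (A + 3*A*B/(1-α)) * χ ^ (α + 1/2) := by
        have hc : (0:ℝ) ≤ 3*A*B/(1-α) := by positivity
        have hApos : (0:ℝ) < A := lt_of_lt_of_le one_pos hA
        nlinarith

lemma boot_final (A : ℝ) (hA : 1 ≤ A) (h : ℝ → ℝ) (hm : Measurable h)
    (h0 : ∀ χ ∈ Set.Ioc (0:ℝ) 1, 0 ≤ h χ ∧ h χ ≤ A * Real.sqrt χ)
    (hfun : ∀ χ ∈ Set.Ioc (0:ℝ) 1,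
      h χ ≤ A * χ ^ ((3:ℝ)/2) * (1 + ∫ t in Set.Icc (1:ℝ) (3/χ), h (1/t)))
    (B α : ℝ) (hB : 0 ≤ B) (hα : (1:ℝ) < α)
    (hbd : ∀ χ ∈ Set.Ioc (0:ℝ) 1, h χ ≤ B * χ ^ α) :
    ∀ χ ∈ Set.Ioc (0:ℝ) 1, h χ ≤ A * (1 + B/(α-1)) * χ ^ ((3:ℝ)/2) := by
  intro χ hχ
  obtain ⟨hχ0, hχ1⟩ := hχ
  have hb : (1:ℝ) ≤ 3/χ := by rw [le_div_iff₀ hχ0]; linarith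
  have hI := aux_mono h hm A hA h0 B α (3/χ) hB hb (by linarith) hbd
  have hble : (3/χ) ^ (1-α) ≤ 1 :=
    Real.rpow_le_one_of_one_le_of_nonpos hb (by linarith)
  have hbpos : (0:ℝ) ≤ (3/χ) ^ (1-α) := Real.rpow_nonneg (by positivity) _
  have hquot : ((3/χ) ^ (1-α) - 1) / (1-α) ≤ 1/(α-1) := by
    have heq : ((3/χ) ^ (1-α) - 1) / (1-α) = (1 - (3/χ) ^ (1-α)) / (α-1) := by
      rw [div_eq_div_iff (ne_of_lt (by linarith)) (ne_of_gt (by linarith))]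
      ring
    rw [heq]
    gcongr <;> linarith
  have hIb : ∫ t in Set.Icc (1:ℝ) (3/χ), h (1/t) ≤ B/(α-1) := by
    calc ∫ t in Set.Icc (1:ℝ) (3/χ), h (1/t) ≤ B * (((3/χ) ^ (1-α) - 1) / (1-α)) := hI
      _ ≤ B * (1/(α-1)) := by gcongr
      _ = B/(α-1) := by ring
  have hx32 : (0:ℝ) < χ ^ ((3:ℝ)/2) := Real.rpow_pos_of_pos hχ0 _
  have hApos : (0:ℝ) < A := lt_of_lt_of_le one_pos hA
  calc h χ ≤ A * χ ^ ((3:ℝ)/2) * (1 + ∫ t in Set.Icc (1:ℝ) (3/χ), h (1/t)) :=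
        hfun χ ⟨hχ0, hχ1⟩
    _ ≤ A * χ ^ ((3:ℝ)/2) * (1 + B/(α-1)) :=
        mul_le_mul_of_nonneg_left (by linarith) (by positivity)
    _ = A * (1 + B/(α-1)) * χ ^ ((3:ℝ)/2) := by ring

theorem stmt5 (A : ℝ) (hA : 1 ≤ A) :
    ∃ C : ℝ, 0 < C ∧
      ∀ h : ℝ → ℝ, Measurable h →
        (∀ χ ∈ Set.Ioc (0 : ℝ) 1, 0 ≤ h χ ∧ h χ ≤ A * Real.sqrt χ) →
        (∀ χ ∈ Set.Ioc (0 : ℝ) 1,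
          h χ ≤ A * χ ^ ((3 : ℝ) / 2) * (1 + ∫ t in Set.Icc (1 : ℝ) (3 / χ), h (1 / t))) →
        ∀ χ ∈ Set.Ioc (0 : ℝ) 1, h χ ≤ C * χ ^ ((3 : ℝ) / 2) := by
  have hA0 : (0:ℝ) < A := by linarith
  have hAA : (0:ℝ) < A * A := mul_pos hA0 hA0
  have hAAA : (0:ℝ) < A * A * A := mul_pos hAA hA0
  refine ⟨A * (1 + (A + 12*A*(A+6*A*A))/(5/4-1)), ?_, ?_⟩
  · have hB2 : (0:ℝ) ≤ A + 12*A*(A+6*A*A) := by nlinarith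
    have : (0:ℝ) < 1 + (A + 12*A*(A+6*A*A))/(5/4-1) := by
      have := div_nonneg hB2 (by norm_num : (0:ℝ) ≤ 5/4-1)
      linarith
    exact mul_pos hA0 this
  intro h hm h0 hfun
  have hbd0 : ∀ χ ∈ Set.Ioc (0:ℝ) 1, h χ ≤ A * χ ^ ((1:ℝ)/2) := by
    intro χ hχ
    have := (h0 χ hχ).2
    rwa [Real.sqrt_eq_rpow] at this
  have h1 := boot A hA h hm h0 hfun A (1/2) hA0.le (by norm_num) (by norm_num) hbd0
  have h1' : ∀ χ ∈ Set.Ioc (0:ℝ) 1, h χ ≤ (A + 6*A*A) * χ ^ ((3:ℝ)/4) := by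
    intro χ hχ
    have hh := h1 χ hχ
    have e : A + 3*A*A/(1-1/2) = A + 6*A*A := by ring
    rw [e] at hh
    have hex : χ ^ ((1:ℝ)/2 + 1/2) ≤ χ ^ ((3:ℝ)/4) :=
      Real.rpow_le_rpow_of_exponent_ge hχ.1 hχ.2 (by norm_num)
    have hnn : (0:ℝ) ≤ A + 6*A*A := by nlinarith
    calc h χ ≤ (A+6*A*A) * χ ^ ((1:ℝ)/2 + 1/2) := hh
      _ ≤ (A+6*A*A) * χ ^ ((3:ℝ)/4) := mul_le_mul_of_nonneg_left hex hnn
  have h2 := boot A hA h hm h0 hfun (A+6*A*A) (3/4) (by nlinarith) (by norm_num)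
    (by norm_num) h1'
  have h2' : ∀ χ ∈ Set.Ioc (0:ℝ) 1, h χ ≤ (A + 12*A*(A+6*A*A)) * χ ^ ((5:ℝ)/4) := by
    intro χ hχ
    have hh := h2 χ hχ
    have e : A + 3*A*(A+6*A*A)/(1-3/4) = A + 12*A*(A+6*A*A) := by ring
    have eex : ((3:ℝ)/4 + 1/2) = 5/4 := by norm_num
    rw [e, eex] at hh
    exact hh
  have h3 := boot_final A hA h hm h0 hfun (A + 12*A*(A+6*A*A)) (5/4) (by nlinarith)
    (by norm_num) h2'
  intro χ hχ
  exact h3 χ hχ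
end

section
/- Let d ≥ 7 be an integer. There exists a constant C = C(d) > 0 such that for every real N ≥ 1 and all v₁, v₂, w ∈ ℤ^d with ‖v₂ − w‖ ≥ N: the function z ↦ ⟨z−v₁⟩^(2−d) · ⟨z−v₂⟩^(2−d) · ⟨z−w⟩^(2−d) is summable over ℤ^d and ∑'_{z ∈ ℤ^d} ⟨z−v₁⟩^(2−d) · ⟨z−v₂⟩^(2−d) · ⟨z−w⟩^(2−d) ≤ C · N^(2−d) · ( ⟨v₁−w⟩^(4−d) + ⟨v₁−v₂⟩^(4−d) ). -/
/-- Euclidean norm of a lattice point of `ℤ^d`. -/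
noncomputable def euclNorm {d : ℕ} (x : Fin d → ℤ) : ℝ :=
  Real.sqrt (∑ i, ((x i : ℝ)) ^ 2)

/-- The "Japanese bracket" `⟨x⟩ = ‖x‖ + 1`. -/
noncomputable def jap {d : ℕ} (x : Fin d → ℤ) : ℝ := euclNorm x + 1

/-- Sup norm of a lattice point of `ℤ^d`. -/
noncomputable def supNorm {d : ℕ} (x : Fin d → ℤ) : ℝ :=
  ((Finset.univ.sup (fun i => (x i).natAbs) : ℕ) : ℝ)

/-- The sup-norm box `B_y(M)` of radius `M` centred at `y`. -/
def latBox {d : ℕ} (y : Fin d → ℤ) (M : ℝ) : Set (Fin d → ℤ) :=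
  {x | supNorm (x - y) ≤ M}

/-- The inner vertex boundary `∂B_y(M)` of the box `B_y(M)`. -/
def latBdry {d : ℕ} (y : Fin d → ℤ) (M : ℝ) : Set (Fin d → ℤ) :=
  {x | x ∈ latBox y M ∧ ∃ x', x' ∉ latBox y M ∧ (∑ i, |x i - x' i|) = 1}

namespace Aux
variable {d : ℕ}

def toE {d : ℕ} (x : Fin d → ℤ) : EuclideanSpace ℝ (Fin d) := WithLp.toLp 2 (fun i => (x i : ℝ))

lemma euclNorm_eq (x : Fin d → ℤ) : euclNorm x = ‖toE x‖ := by
  rw [EuclideanSpace.norm_eq, euclNorm]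
  congr 1
  apply Finset.sum_congr rfl
  intro i _
  rw [Real.norm_eq_abs, sq_abs]
  rfl

lemma euclNorm_nonneg (x : Fin d → ℤ) : 0 ≤ euclNorm x := Real.sqrt_nonneg _

lemma toE_sub (x y : Fin d → ℤ) : toE (x - y) = toE x - toE y := by
  ext i; simp [toE]

lemma euclNorm_tri (a b c : Fin d → ℤ) :
    euclNorm (a - b) ≤ euclNorm (c - a) + euclNorm (c - b) := by
  rw [euclNorm_eq, euclNorm_eq, euclNorm_eq, toE_sub, toE_sub, toE_sub]
  have : toE a - toE b = -(toE c - toE a) + (toE c - toE b) := by abel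
  rw [this]
  exact (norm_add_le _ _).trans (by rw [norm_neg])

/-- sup-norm as a natural number -/
def m {d : ℕ} (x : Fin d → ℤ) : ℕ := Finset.univ.sup fun i => (x i).natAbs

lemma abs_coord_le (x : Fin d → ℤ) (i : Fin d) : |(x i : ℝ)| ≤ euclNorm x := by
  rw [euclNorm, ← Real.sqrt_sq_eq_abs]
  apply Real.sqrt_le_sqrt
  exact Finset.single_le_sum (f := fun j => ((x j : ℝ))^2) (fun j _ => sq_nonneg _)
    (Finset.mem_univ i)

lemma m_le_euclNorm (x : Fin d → ℤ) : (m x : ℝ) ≤ euclNorm x := by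
  rcases (Finset.univ : Finset (Fin d)).eq_empty_or_nonempty with h | h
  · have : m x = 0 := by simp [m, h]
    rw [this]; exact_mod_cast euclNorm_nonneg x
  · obtain ⟨i, _, hi⟩ := Finset.exists_mem_eq_sup Finset.univ h fun j => (x j).natAbs
    rw [m, hi]
    calc ((x i).natAbs : ℝ) = |(x i : ℝ)| := by simp [Nat.cast_natAbs]
      _ ≤ euclNorm x := abs_coord_le x i

lemma euclNorm_le_d_mul_m (x : Fin d → ℤ) : euclNorm x ≤ d * (m x + 1) := by
  rw [euclNorm]
  have h1 : ∀ i, ((x i : ℝ))^2 ≤ ((m x : ℝ) + 1)^2 := by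
    intro i
    have h2 : (x i).natAbs ≤ m x := Finset.le_sup (f := fun j => (x j).natAbs) (Finset.mem_univ i)
    have : |(x i : ℝ)| ≤ (m x : ℝ) + 1 := by
      calc |(x i : ℝ)| = ((x i).natAbs : ℝ) := by simp [Nat.cast_natAbs]
        _ ≤ (m x : ℝ) := by exact_mod_cast h2
        _ ≤ _ := by linarith
    calc ((x i : ℝ))^2 = |(x i : ℝ)|^2 := (sq_abs _).symm
      _ ≤ _ := by apply sq_le_sq' <;> nlinarith [abs_nonneg ((x i : ℝ))]
  calc Real.sqrt (∑ i, ((x i : ℝ))^2) ≤ Real.sqrt (∑ _i : Fin d, ((m x : ℝ)+1)^2) := by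
        apply Real.sqrt_le_sqrt; exact Finset.sum_le_sum fun i _ => h1 i
    _ = Real.sqrt (d * ((m x : ℝ)+1)^2) := by rw [Finset.sum_const]; simp [mul_comm]
    _ ≤ Real.sqrt ((d*((m x:ℝ)+1))^2) := by
        apply Real.sqrt_le_sqrt; have h0 : (0:ℝ) ≤ (m x : ℝ) + 1 := by positivity
        have hd0 : (0:ℝ) ≤ (d:ℝ) := Nat.cast_nonneg d
        have hd1 : (d:ℝ) ≤ (d:ℝ)^2 := by exact_mod_cast Nat.le_self_pow (by norm_num) d
        calc (d:ℝ) * ((m x:ℝ)+1)^2 ≤ (d:ℝ)^2 * ((m x:ℝ)+1)^2 := by nlinarith [sq_nonneg ((m x:ℝ)+1)]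
          _ = ((d:ℝ)*((m x:ℝ)+1))^2 := by ring
    _ = d * ((m x : ℝ)+1) := Real.sqrt_sq (by positivity)

lemma one_le_jap (x : Fin d → ℤ) : 1 ≤ jap x := by
  have := euclNorm_nonneg x; rw [jap]; linarith

lemma jap_pos (x : Fin d → ℤ) : 0 < jap x := lt_of_lt_of_le one_pos (one_le_jap x)


noncomputable def Box (d K : ℕ) : Finset (Fin d → ℤ) :=
  Fintype.piFinset fun _ => Finset.Icc (-(K:ℤ)) (K:ℤ)

lemma mem_Box {K : ℕ} {z : Fin d → ℤ} : z ∈ Box d K ↔ m z ≤ K := by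
  rw [Box, Fintype.mem_piFinset, m, Finset.sup_le_iff]
  constructor
  · intro h i _
    have := h i
    rw [Finset.mem_Icc] at this
    omega
  · intro h i
    have := h i (Finset.mem_univ i)
    rw [Finset.mem_Icc]
    omega

lemma card_Box (K : ℕ) : (Box d K).card = (2*K+1)^d := by
  rw [Box, Fintype.card_piFinset]
  have : ∀ _i : Fin d, (Finset.Icc (-(K:ℤ)) (K:ℤ)).card = 2*K+1 := by
    intro i
    rw [Int.card_Icc]
    omega
  rw [Finset.prod_congr rfl (fun i _ => this i), Finset.prod_const, Finset.card_univ,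
    Fintype.card_fin]

noncomputable def Shell (d k : ℕ) : Finset (Fin d → ℤ) := (Box d k).filter (fun z => m z = k)

lemma pow_sub_pow_le_real {a b : ℝ} (h0 : 0 ≤ b) (hba : b ≤ a) (n : ℕ) :
    a^n - b^n ≤ n * (a-b) * a^(n-1) := by
  induction n with
  | zero => simp
  | succ n ih =>
    have ha : 0 ≤ a := le_trans h0 hba
    have hpow : b^n ≤ a^n := pow_le_pow_left₀ h0 hba n
    have key : a^(n+1) - b^(n+1) = a*(a^n - b^n) + (a-b)*b^n := by ring
    rcases Nat.eq_zero_or_pos n with hn | hn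
    · subst hn; simp
    · have h1 : a*(a^n - b^n) ≤ a * (n * (a-b) * a^(n-1)) :=
        mul_le_mul_of_nonneg_left ih ha
      have h2 : a * (n * (a-b) * a^(n-1)) = n * (a-b) * a^n := by
        have hn' : n - 1 + 1 = n := by omega
        calc a * (n * (a-b) * a^(n-1)) = n * (a-b) * (a^(n-1) * a) := by ring
          _ = n * (a-b) * a^(n-1+1) := by rw [pow_succ]
          _ = n * (a-b) * a^n := by rw [hn']
      have h3 : (a-b)*b^n ≤ (a-b)*a^n :=
        mul_le_mul_of_nonneg_left hpow (by linarith)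
      push_cast
      calc a^(n+1) - b^(n+1) = a*(a^n - b^n) + (a-b)*b^n := key
        _ ≤ n * (a-b) * a^n + (a-b)*a^n := by linarith
        _ = (n+1) * (a-b) * a^(n+1-1) := by push_cast; ring_nf

lemma Box_mono {K L : ℕ} (h : K ≤ L) : Box d K ⊆ Box d L := by
  intro z hz
  rw [mem_Box] at *
  omega

lemma shellCard_le (hd : 1 ≤ d) (k : ℕ) :
    ((Shell d k).card : ℝ) ≤ (2*d*3^(d-1) : ℕ) * ((k:ℝ)+1)^(d-1) := by
  have hD1 : (1:ℝ) ≤ (2*d*3^(d-1) : ℕ) := by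
    have h1 : 0 < 2*d*3^(d-1) :=
      Nat.mul_pos (Nat.mul_pos (by norm_num) hd) (pow_pos (by norm_num) _)
    exact_mod_cast h1
  rcases Nat.eq_zero_or_pos k with hk | hk
  · subst hk
    have hsub : Shell d 0 ⊆ Box d 0 := Finset.filter_subset _ _
    have hcard : ((Shell d 0).card : ℝ) ≤ 1 := by
      have := Finset.card_le_card hsub
      rw [card_Box] at this
      have : (Shell d 0).card ≤ 1 := by simpa using this
      exact_mod_cast this
    calc ((Shell d 0).card : ℝ) ≤ 1 := hcard
      _ ≤ _ := by
          rw [show ((0:ℕ):ℝ) + 1 = 1 by norm_num, one_pow, mul_one]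
          exact hD1
  · -- k ≥ 1
    have hsub : Shell d k ⊆ Box d k \ Box d (k-1) := by
      intro z hz
      rw [Shell, Finset.mem_filter] at hz
      rw [Finset.mem_sdiff]
      refine ⟨hz.1, ?_⟩
      rw [mem_Box]
      omega
    have hBsub : Box d (k-1) ⊆ Box d k := Box_mono (by omega)
    have hcard : (Shell d k).card ≤ (2*k+1)^d - (2*(k-1)+1)^d := by
      calc (Shell d k).card ≤ (Box d k \ Box d (k-1)).card := Finset.card_le_card hsub
        _ = (Box d k).card - (Box d (k-1)).card := Finset.card_sdiff_of_subset hBsub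
        _ = (2*k+1)^d - (2*(k-1)+1)^d := by rw [card_Box, card_Box]
    have hcast : ((Shell d k).card : ℝ) ≤ ((2*k+1:ℕ):ℝ)^d - ((2*(k-1)+1:ℕ):ℝ)^d := by
      have hle : (2*(k-1)+1)^d ≤ (2*k+1)^d := Nat.pow_le_pow_left (by omega) d
      have := (Nat.cast_le (α := ℝ)).2 hcard
      rw [Nat.cast_sub hle] at this
      push_cast at this ⊢
      linarith
    have hba : ((2*(k-1)+1:ℕ):ℝ) ≤ ((2*k+1:ℕ):ℝ) := by
      have : 2*(k-1)+1 ≤ 2*k+1 := by omega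
      exact_mod_cast this
    have hpow := pow_sub_pow_le_real (a := ((2*k+1:ℕ):ℝ)) (b := ((2*(k-1)+1:ℕ):ℝ))
      (by positivity) hba d
    have hab : ((2*k+1:ℕ):ℝ) - ((2*(k-1)+1:ℕ):ℝ) = 2 := by
      have hk1 : 2*(k-1)+1 + 2 = 2*k+1 := by omega
      rw [← hk1]
      push_cast
      ring
    have ha3 : ((2*k+1:ℕ):ℝ) ≤ 3*((k:ℝ)+1) := by push_cast; linarith
    have hpow2 : ((2*k+1:ℕ):ℝ)^(d-1) ≤ 3^(d-1) * ((k:ℝ)+1)^(d-1) := by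
      calc ((2*k+1:ℕ):ℝ)^(d-1) ≤ (3*((k:ℝ)+1))^(d-1) :=
            pow_le_pow_left₀ (by positivity) ha3 _
        _ = 3^(d-1) * ((k:ℝ)+1)^(d-1) := mul_pow _ _ _
    calc ((Shell d k).card : ℝ) ≤ ((2*k+1:ℕ):ℝ)^d - ((2*(k-1)+1:ℕ):ℝ)^d := hcast
      _ ≤ d * (((2*k+1:ℕ):ℝ) - ((2*(k-1)+1:ℕ):ℝ)) * ((2*k+1:ℕ):ℝ)^(d-1) := hpow
      _ = 2*d * ((2*k+1:ℕ):ℝ)^(d-1) := by rw [hab]; ring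
      _ ≤ 2*d * (3^(d-1) * ((k:ℝ)+1)^(d-1)) := by
          apply mul_le_mul_of_nonneg_left hpow2 (by positivity)
      _ = ((2*d*3^(d-1) : ℕ):ℝ) * ((k:ℝ)+1)^(d-1) := by push_cast; ring



lemma master {G : (Fin d → ℤ) → ℝ} {g : ℕ → ℝ} (hG : ∀ z, 0 ≤ G z)
    (hg : ∀ k, 0 ≤ g k) (hle : ∀ z, G z ≤ g (m z)) {A : ℝ}
    (hA : ∀ K : ℕ, ∑ k ∈ Finset.range (K+1), ((Shell d k).card : ℝ) * g k ≤ A) :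
    Summable G ∧ ∑' z, G z ≤ A := by
  have key : ∀ s : Finset (Fin d → ℤ), ∑ z ∈ s, G z ≤ A := by
    intro s
    set K := s.sup m with hK
    have hsub : s ⊆ Box d K := by
      intro z hz
      rw [mem_Box]
      exact Finset.le_sup hz
    have h1 : ∑ z ∈ s, G z ≤ ∑ z ∈ Box d K, G z :=
      Finset.sum_le_sum_of_subset_of_nonneg hsub (fun z _ _ => hG z)
    have hmaps : ∀ z ∈ Box d K, m z ∈ Finset.range (K+1) := by
      intro z hz
      rw [Finset.mem_range]
      rw [mem_Box] at hz
      omega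
    have h2 : ∑ k ∈ Finset.range (K+1), ∑ z ∈ (Box d K).filter (fun z => m z = k), G z
        = ∑ z ∈ Box d K, G z := Finset.sum_fiberwise_of_maps_to hmaps G
    have h3 : ∀ k ∈ Finset.range (K+1),
        (Box d K).filter (fun z => m z = k) = Shell d k := by
      intro k hk
      rw [Finset.mem_range] at hk
      ext z
      rw [Shell, Finset.mem_filter, Finset.mem_filter, mem_Box, mem_Box]
      omega
    have h4 : ∀ k, ∑ z ∈ Shell d k, G z ≤ ((Shell d k).card : ℝ) * g k := by
      intro k
      calc ∑ z ∈ Shell d k, G z ≤ ∑ z ∈ Shell d k, g k := by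
            apply Finset.sum_le_sum
            intro z hz
            rw [Shell, Finset.mem_filter] at hz
            calc G z ≤ g (m z) := hle z
              _ = g k := by rw [hz.2]
        _ = ((Shell d k).card : ℝ) * g k := by
            rw [Finset.sum_const, nsmul_eq_mul]
    calc ∑ z ∈ s, G z ≤ ∑ z ∈ Box d K, G z := h1
      _ = ∑ k ∈ Finset.range (K+1), ∑ z ∈ (Box d K).filter (fun z => m z = k), G z := h2.symm
      _ = ∑ k ∈ Finset.range (K+1), ∑ z ∈ Shell d k, G z :=
          Finset.sum_congr rfl (fun k hk => by rw [h3 k hk])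
      _ ≤ ∑ k ∈ Finset.range (K+1), ((Shell d k).card : ℝ) * g k :=
          Finset.sum_le_sum (fun k _ => h4 k)
      _ ≤ A := hA K
  have hs : Summable G := summable_of_sum_le hG key
  exact ⟨hs, Summable.tsum_le_of_sum_le hs key⟩


/-- telescope term inequality: for `k ≥ 1`, `(k+1)^{-(t+1)} ≤ (1/t)(k^{-t} - (k+1)^{-t})`,
here stated multiplied out since `t ≥ 1`. -/
lemma telescope_term {t k : ℕ} (ht : 1 ≤ t) (hk : 1 ≤ k) :
    ((((k:ℝ)+1)^(t+1))⁻¹ : ℝ) ≤ (((k:ℝ))^t)⁻¹ - (((k:ℝ)+1)^t)⁻¹ := by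
  set x : ℝ := (k:ℝ) with hxdef
  have hx : (1:ℝ) ≤ x := by rw [hxdef]; exact_mod_cast hk
  have hx0 : (0:ℝ) < x := by linarith
  -- Bernoulli
  have hb : 1 + (t:ℝ) * (1/x) ≤ (1 + 1/x)^t := by
    apply one_add_mul_le_pow
    have : (0:ℝ) < 1/x := by positivity
    linarith
  have hxx : (1:ℝ) + 1/x = (x+1)/x := by field_simp
  have hb2 : 1 + (t:ℝ)/x ≤ (x+1)^t / x^t := by
    rw [hxx, div_pow] at hb
    calc (1:ℝ) + (t:ℝ)/x = 1 + (t:ℝ)*(1/x) := by ring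
      _ ≤ _ := hb
  have hxt : (0:ℝ) < x^t := by positivity
  have key : x^t + (t:ℝ)*x^(t-1) ≤ (x+1)^t := by
    have h3 := mul_le_mul_of_nonneg_right hb2 hxt.le
    have h4 : (x+1)^t / x^t * x^t = (x+1)^t := by field_simp
    have h5 : (1 + (t:ℝ)/x) * x^t = x^t + (t:ℝ) * (x^t/x) := by ring
    have h6 : x^t / x = x^(t-1) := by
      rw [div_eq_iff hx0.ne', ← pow_succ]
      congr 1
      omega
    rw [h5, h6] at h3
    rw [h4] at h3
    exact h3
  -- cross-multiplied comparison
  have hA : (0:ℝ) < x^t := hxt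
  have hB : (0:ℝ) < (x+1)^t := by positivity
  have hC : (0:ℝ) < (x+1)^(t+1) := by positivity
  have ht1 : (1:ℝ) ≤ (t:ℝ) := by exact_mod_cast ht
  have h6m : x^(t-1) * x = x^t := by rw [← pow_succ]; congr 1; omega
  have h7 : (x^t)⁻¹ - ((x+1)^t)⁻¹ = ((x+1)^t - x^t)/(x^t*(x+1)^t) := by
    field_simp
  rw [h7, inv_eq_one_div, div_le_div_iff₀ hC (by positivity)]
  have hy : (0:ℝ) ≤ x^(t-1) := by positivity
  have e1 : (x+1)^(t+1) = (x+1)^t*(x+1) := pow_succ _ _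
  have hkey2 : (t:ℝ)*x^(t-1) ≤ (x+1)^t - x^t := by linarith
  calc 1 * (x^t*(x+1)^t) = (x^(t-1)*x)*(x+1)^t := by rw [h6m]; ring
    _ ≤ ((t:ℝ)*x^(t-1))*((x+1)^t*(x+1)) := by nlinarith [mul_nonneg (mul_nonneg (sub_nonneg.2 ht1) hx0.le) (mul_nonneg hy hB.le), mul_nonneg (le_trans zero_le_one ht1) (mul_nonneg hy hB.le)]
    _ = ((t:ℝ)*x^(t-1))*(x+1)^(t+1) := by rw [← e1]
    _ ≤ ((x+1)^t - x^t)*(x+1)^(t+1) := mul_le_mul_of_nonneg_right hkey2 hC.le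


end Aux

namespace Aux2
open Finset

lemma tail_sum {t : ℕ} (ht : 1 ≤ t) {dr M : ℝ} (hdr : 1 ≤ dr) (hM : 0 < M) (K : ℕ) :
    ∑ k ∈ Finset.range (K+1), (if M < dr*((k:ℝ)+1) then (((k:ℝ)+1)^(t+1))⁻¹ else 0)
      ≤ (dr^t + (2*dr)^t) * (M^t)⁻¹ := by
  have hdr0 : (0:ℝ) < dr := lt_of_lt_of_le one_pos hdr
  have hMt : (0:ℝ) < M^t := by positivity
  set f : ℕ → ℝ := fun k => (if M < dr*((k:ℝ)+1) then (((k:ℝ)+1)^(t+1))⁻¹ else 0) with hf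
  have hf0 : ∀ k, 0 ≤ f k := by
    intro k; rw [hf]; dsimp only; split <;> positivity
  -- split off k = 0
  have hsplit : ∑ k ∈ Finset.range (K+1), f k
      = f 0 + ∑ k ∈ Finset.Ico 1 (K+1), f k := by
    rw [Finset.range_eq_Ico, ← Finset.sum_Ico_consecutive _ (Nat.zero_le 1) (by omega : 1 ≤ K+1)]
    congr 1
    rw [show Finset.Ico 0 1 = {0} from rfl, Finset.sum_singleton]
  rw [hsplit]
  have h0 : f 0 ≤ dr^t * (M^t)⁻¹ := by
    rw [hf]; dsimp only
    split
    · rename_i h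
      have hMdr : M < dr := by push_cast at h; linarith
      have hpt : M^t ≤ dr^t := pow_le_pow_left₀ hM.le hMdr.le t
      rw [show ((0:ℕ):ℝ) + 1 = 1 by norm_num, one_pow, inv_one]
      calc (1:ℝ) = M^t * (M^t)⁻¹ := (mul_inv_cancel₀ hMt.ne').symm
        _ ≤ dr^t * (M^t)⁻¹ := mul_le_mul_of_nonneg_right hpt (by positivity)
    · positivity
  -- the tail over k ≥ 1
  set u : ℕ → ℝ := fun n => (((n:ℝ))^t)⁻¹ with hu
  set k₁ : ℕ := max 1 (Nat.ceil (M/dr) - 1) with hk₁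
  have hk₁1 : 1 ≤ k₁ := le_max_left _ _
  have htail : ∑ k ∈ Finset.Ico 1 (K+1), f k ≤ (2*dr)^t * (M^t)⁻¹ := by
    have hsubset : ∀ k ∈ Finset.Ico 1 (K+1), f k ≠ 0 → k₁ ≤ k := by
      intro k hk hfk
      rw [Finset.mem_Ico] at hk
      have hcond : M < dr*((k:ℝ)+1) := by
        by_contra hc
        apply hfk
        rw [hf]
        simp [hc]
      have hceil : Nat.ceil (M/dr) ≤ k+1 := by
        rw [Nat.ceil_le]
        push_cast
        rw [div_le_iff₀ hdr0]
        nlinarith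
      omega
    have hmono : ∑ k ∈ Finset.Ico 1 (K+1), f k ≤ ∑ k ∈ Finset.Ico k₁ (K+1), f k := by
      rw [← Finset.sum_filter_ne_zero (Finset.Ico 1 (K+1)) (f := f)]
      apply Finset.sum_le_sum_of_subset_of_nonneg
      · intro k hk
        rw [Finset.mem_filter] at hk
        rw [Finset.mem_Ico]
        have h1 := hsubset k hk.1 hk.2
        rw [Finset.mem_Ico] at hk
        omega
      · intro k _ _
        exact hf0 k
    have hanti : ∀ k : ℕ, 1 ≤ k → u (k+1) ≤ u k := by
      intro k hk
      rw [hu]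
      dsimp only
      apply inv_anti₀
      · have : (0:ℝ) < (k:ℝ) := by exact_mod_cast hk
        positivity
      · apply pow_le_pow_left₀ (by positivity)
        push_cast
        linarith
    have htele : ∑ k ∈ Finset.Ico k₁ (K+1), f k ≤ u k₁ := by
      have hterm : ∀ k ∈ Finset.Ico k₁ (K+1), f k ≤ u k - u (k+1) := by
        intro k hk
        rw [Finset.mem_Ico] at hk
        have hk1 : 1 ≤ k := le_trans hk₁1 hk.1
        rw [hf]
        dsimp only
        split
        · have htt := Aux.telescope_term (t := t) (k := k) ht hk1
          rw [hu]
          dsimp only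
          push_cast
          convert htt using 3
        · have := hanti k hk1
          linarith
      calc ∑ k ∈ Finset.Ico k₁ (K+1), f k ≤ ∑ k ∈ Finset.Ico k₁ (K+1), (u k - u (k+1)) :=
            Finset.sum_le_sum hterm
        _ ≤ u k₁ := by
            by_cases hKk : k₁ ≤ K+1
            · rw [Finset.sum_Ico_eq_sub _ hKk, Finset.sum_range_sub' u, Finset.sum_range_sub' u]
              have hup : 0 ≤ u (K+1) := by rw [hu]; positivity
              linarith
            · rw [Finset.Ico_eq_empty (by omega), Finset.sum_empty]
              rw [hu]; positivity
    have hk₁M : M/(2*dr) ≤ (k₁:ℝ) := by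
      have hk₁R : (1:ℝ) ≤ (k₁:ℝ) := by exact_mod_cast hk₁1
      by_cases hc : M/dr ≤ 2
      · have : M/(2*dr) ≤ 1 := by
          rw [div_le_one (by positivity)]
          rw [div_le_iff₀ hdr0] at hc
          linarith
        linarith
      · push_neg at hc
        have hceil : (2:ℝ) < (Nat.ceil (M/dr) : ℝ) := lt_of_lt_of_le hc (Nat.le_ceil _)
        have hceil3 : 3 ≤ Nat.ceil (M/dr) := by
          have h2c : (2:ℕ) < Nat.ceil (M/dr) := by exact_mod_cast hceil
          omega
        have hk₁ge : (Nat.ceil (M/dr) - 1 : ℕ) ≤ k₁ := le_max_right _ _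
        have hcast : ((Nat.ceil (M/dr) - 1 : ℕ) : ℝ) = (Nat.ceil (M/dr) : ℝ) - 1 := by
          have : 1 ≤ Nat.ceil (M/dr) := by omega
          push_cast [Nat.cast_sub this]
          ring
        have h5 : M/dr - 1 ≤ (k₁:ℝ) := by
          have h6 : (Nat.ceil (M/dr) : ℝ) - 1 ≤ (k₁:ℝ) := by
            rw [← hcast]; exact_mod_cast hk₁ge
          have := Nat.le_ceil (M/dr)
          linarith
        have h7 : M/(2*dr) ≤ M/dr - 1 := by
          have h8 : 2 ≤ M/dr := hc.le
          have h9 : M/(2*dr) = (M/dr)/2 := by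
            rw [div_div, mul_comm]
          rw [h9]
          linarith
        linarith
    have hfinal : u k₁ ≤ (2*dr)^t * (M^t)⁻¹ := by
      rw [hu]
      dsimp only
      have hq : (0:ℝ) < M/(2*dr) := by positivity
      have h10 : (M/(2*dr))^t ≤ (k₁:ℝ)^t := pow_le_pow_left₀ hq.le hk₁M t
      have h11 : ((k₁:ℝ)^t)⁻¹ ≤ ((M/(2*dr))^t)⁻¹ := by
        apply inv_anti₀ (by positivity) h10
      calc ((k₁:ℝ)^t)⁻¹ ≤ ((M/(2*dr))^t)⁻¹ := h11
        _ = (2*dr)^t * (M^t)⁻¹ := by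
            rw [div_pow]
            rw [inv_div]
            ring
    linarith
  calc f 0 + ∑ k ∈ Finset.Ico 1 (K+1), f k ≤ dr^t * (M^t)⁻¹ + (2*dr)^t * (M^t)⁻¹ :=
        add_le_add h0 htail
    _ = (dr^t + (2*dr)^t) * (M^t)⁻¹ := by ring

end Aux2

namespace Aux3
open Finset

lemma trunc_sum {M : ℝ} (hM : 1 ≤ M) (K : ℕ) :
    ∑ k ∈ Finset.range (K+1), (if (k:ℝ) ≤ M then ((k:ℝ)+1) else 0) ≤ 4*M^2 := by
  have hM0 : (0:ℝ) < M := lt_of_lt_of_le one_pos hM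
  have step1 : ∑ k ∈ Finset.range (K+1), (if (k:ℝ) ≤ M then ((k:ℝ)+1) else 0)
      ≤ ∑ k ∈ Finset.range (K+1), (if (k:ℝ) ≤ M then 2*M else 0) := by
    apply Finset.sum_le_sum
    intro k _
    split
    · rename_i h; linarith
    · exact le_refl 0
  have step2 : ∑ k ∈ Finset.range (K+1), (if (k:ℝ) ≤ M then 2*M else 0)
      = (((Finset.range (K+1)).filter (fun k : ℕ => (k:ℝ) ≤ M)).card : ℝ) * (2*M) := by
    rw [← Finset.sum_filter, Finset.sum_const, nsmul_eq_mul]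
  have step3 : (((Finset.range (K+1)).filter (fun k : ℕ => (k:ℝ) ≤ M)).card : ℝ) ≤ 2*M := by
    have hsub : (Finset.range (K+1)).filter (fun k : ℕ => (k:ℝ) ≤ M) ⊆
        Finset.range (Nat.floor M + 1) := by
      intro k hk
      rw [Finset.mem_filter] at hk
      rw [Finset.mem_range]
      have := Nat.le_floor hk.2
      omega
    have h1 := Finset.card_le_card hsub
    have h2 : (Finset.range (Nat.floor M + 1)).card = Nat.floor M + 1 := Finset.card_range _
    have h3 : ((Nat.floor M : ℕ) : ℝ) ≤ M := Nat.floor_le hM0.le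
    have h4 : (((Finset.range (K+1)).filter (fun k : ℕ => (k:ℝ) ≤ M)).card : ℝ)
        ≤ ((Nat.floor M + 1 : ℕ) : ℝ) := by exact_mod_cast h2 ▸ h1
    push_cast at h4
    linarith
  calc ∑ k ∈ Finset.range (K+1), (if (k:ℝ) ≤ M then ((k:ℝ)+1) else 0)
      ≤ (((Finset.range (K+1)).filter (fun k : ℕ => (k:ℝ) ≤ M)).card : ℝ) * (2*M) :=
        step2 ▸ step1
    _ ≤ (2*M)*(2*M) := mul_le_mul_of_nonneg_right step3 (by linarith)
    _ = 4*M^2 := by ring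
end Aux3

namespace Aux
variable {d : ℕ}

noncomputable def D (d : ℕ) : ℝ := ((2*d*3^(d-1) : ℕ) : ℝ)

lemma D_pos (hd : 1 ≤ d) : 0 < D d := by
  rw [D]
  have h1 : 0 < 2*d*3^(d-1) :=
    Nat.mul_pos (Nat.mul_pos (by norm_num) hd) (pow_pos (by norm_num) _)
  exact_mod_cast h1

lemma jap_ge_m (x : Fin d → ℤ) : (m x : ℝ) + 1 ≤ jap x := by
  rw [jap]
  have := m_le_euclNorm x
  linarith

lemma jap_rpow_le {x : Fin d → ℤ} {s : ℝ} (hs : s ≤ 0) :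
    jap x ^ s ≤ ((m x : ℝ) + 1) ^ s :=
  Real.rpow_le_rpow_of_nonpos (by positivity) (jap_ge_m x) hs

lemma rpow_exp1 (hd : 7 ≤ d) (k : ℕ) :
    ((k:ℝ)+1)^(d-1:ℕ) * ((k:ℝ)+1)^(2-(d:ℝ)) = (k:ℝ)+1 := by
  have hb : (0:ℝ) < (k:ℝ)+1 := by positivity
  rw [← Real.rpow_natCast ((k:ℝ)+1) (d-1), ← Real.rpow_add hb]
  have he : ((d-1:ℕ):ℝ) + (2-(d:ℝ)) = 1 := by
    have h1 : 1 ≤ d := by omega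
    push_cast [Nat.cast_sub h1]
    ring
  rw [he, Real.rpow_one]

lemma rpow_exp2 (hd : 7 ≤ d) (k : ℕ) :
    ((k:ℝ)+1)^(d-1:ℕ) * ((k:ℝ)+1)^(2*(2-(d:ℝ))) = ((((k:ℝ)+1)^(d-4+1:ℕ))⁻¹ : ℝ) := by
  have hb : (0:ℝ) < (k:ℝ)+1 := by positivity
  rw [← Real.rpow_natCast ((k:ℝ)+1) (d-1), ← Real.rpow_add hb]
  have he : ((d-1:ℕ):ℝ) + 2*(2-(d:ℝ)) = -(((d-4+1:ℕ)):ℝ) := by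
    have h1 : 1 ≤ d := by omega
    have h4 : 4 ≤ d := by omega
    push_cast [Nat.cast_sub h1, Nat.cast_sub h4]
    ring
  rw [he, Real.rpow_neg hb.le, Real.rpow_natCast]

/-- truncated single-kernel estimate -/
lemma tsum_trunc (hd : 7 ≤ d) {M : ℝ} (hM : 1 ≤ M) :
    Summable (fun z : Fin d → ℤ => if euclNorm z ≤ M then jap z ^ (2-(d:ℝ)) else 0) ∧
    (∑' z : Fin d → ℤ, if euclNorm z ≤ M then jap z ^ (2-(d:ℝ)) else 0) ≤ D d * (4*M^2) := by
  have hd1 : 1 ≤ d := by omega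
  set G : (Fin d → ℤ) → ℝ := fun z => if euclNorm z ≤ M then jap z ^ (2-(d:ℝ)) else 0 with hG
  set g : ℕ → ℝ := fun k => if (k:ℝ) ≤ M then ((k:ℝ)+1)^(2-(d:ℝ)) else 0 with hg
  have hG0 : ∀ z, 0 ≤ G z := by
    intro z; rw [hG]; dsimp only; split
    · exact Real.rpow_nonneg (jap_pos z).le _
    · exact le_refl 0
  have hg0 : ∀ k, 0 ≤ g k := by
    intro k; rw [hg]; dsimp only; split
    · positivity
    · exact le_refl 0
  have hle : ∀ z, G z ≤ g (m z) := by
    intro z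
    rw [hG, hg]; dsimp only
    split
    · rename_i h
      have h1 : ((m z : ℕ):ℝ) ≤ M := le_trans (m_le_euclNorm z) h
      rw [if_pos h1]
      exact jap_rpow_le (by push_cast; linarith [(show (7:ℝ) ≤ (d:ℝ) by exact_mod_cast hd)])
    · split
      · positivity
      · exact le_refl 0
  have hA : ∀ K : ℕ, ∑ k ∈ Finset.range (K+1), ((Shell d k).card : ℝ) * g k
      ≤ D d * (4*M^2) := by
    intro K
    have step1 : ∀ k, ((Shell d k).card : ℝ) * g k
        ≤ D d * (if (k:ℝ) ≤ M then ((k:ℝ)+1) else 0) := by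
      intro k
      rw [hg]; dsimp only
      split
      · rename_i h
        calc ((Shell d k).card : ℝ) * ((k:ℝ)+1)^(2-(d:ℝ))
            ≤ (D d * ((k:ℝ)+1)^(d-1:ℕ)) * ((k:ℝ)+1)^(2-(d:ℝ)) := by
              apply mul_le_mul_of_nonneg_right (shellCard_le hd1 k) (by positivity)
          _ = D d * (((k:ℝ)+1)^(d-1:ℕ) * ((k:ℝ)+1)^(2-(d:ℝ))) := by ring
          _ = D d * ((k:ℝ)+1) := by rw [rpow_exp1 hd]
      · simp
    calc ∑ k ∈ Finset.range (K+1), ((Shell d k).card : ℝ) * g k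
        ≤ ∑ k ∈ Finset.range (K+1), D d * (if (k:ℝ) ≤ M then ((k:ℝ)+1) else 0) :=
          Finset.sum_le_sum (fun k _ => step1 k)
      _ = D d * ∑ k ∈ Finset.range (K+1), (if (k:ℝ) ≤ M then ((k:ℝ)+1) else 0) :=
          (Finset.mul_sum _ _ _).symm
      _ ≤ D d * (4*M^2) :=
          mul_le_mul_of_nonneg_left (Aux3.trunc_sum hM K) (D_pos hd1).le
  exact master hG0 hg0 hle hA

end Aux

namespace Aux
variable {d : ℕ}

/-- tail single-kernel estimate (squared kernel) -/
lemma tsum_tail (hd : 7 ≤ d) {M : ℝ} (hM : 0 < M) :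
    Summable (fun z : Fin d → ℤ => if euclNorm z ≤ M then 0 else jap z ^ (2*(2-(d:ℝ)))) ∧
    (∑' z : Fin d → ℤ, if euclNorm z ≤ M then 0 else jap z ^ (2*(2-(d:ℝ)))) ≤
      D d * (((d:ℝ)^(d-4:ℕ) + (2*(d:ℝ))^(d-4:ℕ)) * (M^(d-4:ℕ))⁻¹) := by
  have hd1 : 1 ≤ d := by omega
  have hdR : (7:ℝ) ≤ (d:ℝ) := by exact_mod_cast hd
  have hexp : 2*(2-(d:ℝ)) ≤ 0 := by linarith
  set G : (Fin d → ℤ) → ℝ :=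
    fun z => if euclNorm z ≤ M then 0 else jap z ^ (2*(2-(d:ℝ))) with hG
  set g : ℕ → ℝ :=
    fun k => if M < (d:ℝ)*((k:ℝ)+1) then ((k:ℝ)+1)^(2*(2-(d:ℝ))) else 0 with hg
  have hG0 : ∀ z, 0 ≤ G z := by
    intro z; rw [hG]; dsimp only; split
    · exact le_refl 0
    · exact Real.rpow_nonneg (jap_pos z).le _
  have hg0 : ∀ k, 0 ≤ g k := by
    intro k; rw [hg]; dsimp only; split
    · positivity
    · exact le_refl 0
  have hle : ∀ z, G z ≤ g (m z) := by
    intro z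
    rw [hG, hg]; dsimp only
    split
    · split
      · positivity
      · exact le_refl 0
    · rename_i h
      push_neg at h
      have h1 : M < (d:ℝ)*((m z:ℝ)+1) := lt_of_lt_of_le h (euclNorm_le_d_mul_m z)
      rw [if_pos h1]
      exact jap_rpow_le hexp
  have hA : ∀ K : ℕ, ∑ k ∈ Finset.range (K+1), ((Shell d k).card : ℝ) * g k
      ≤ D d * (((d:ℝ)^(d-4:ℕ) + (2*(d:ℝ))^(d-4:ℕ)) * (M^(d-4:ℕ))⁻¹) := by
    intro K
    have step1 : ∀ k, ((Shell d k).card : ℝ) * g k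
        ≤ D d * (if M < (d:ℝ)*((k:ℝ)+1) then ((((k:ℝ)+1)^(d-4+1:ℕ))⁻¹:ℝ) else 0) := by
      intro k
      rw [hg]; dsimp only
      split
      · calc ((Shell d k).card : ℝ) * ((k:ℝ)+1)^(2*(2-(d:ℝ)))
            ≤ (D d * ((k:ℝ)+1)^(d-1:ℕ)) * ((k:ℝ)+1)^(2*(2-(d:ℝ))) := by
              apply mul_le_mul_of_nonneg_right (shellCard_le hd1 k) (by positivity)
          _ = D d * (((k:ℝ)+1)^(d-1:ℕ) * ((k:ℝ)+1)^(2*(2-(d:ℝ)))) := by ring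
          _ = D d * ((((k:ℝ)+1)^(d-4+1:ℕ))⁻¹:ℝ) := by rw [rpow_exp2 hd]
      · simp
    have htail := Aux2.tail_sum (t := d-4) (by omega : 1 ≤ d-4)
      (by exact_mod_cast hd1 : (1:ℝ) ≤ (d:ℝ)) hM K
    calc ∑ k ∈ Finset.range (K+1), ((Shell d k).card : ℝ) * g k
        ≤ ∑ k ∈ Finset.range (K+1),
            D d * (if M < (d:ℝ)*((k:ℝ)+1) then ((((k:ℝ)+1)^(d-4+1:ℕ))⁻¹:ℝ) else 0) :=
          Finset.sum_le_sum (fun k _ => step1 k)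
      _ = D d * ∑ k ∈ Finset.range (K+1),
            (if M < (d:ℝ)*((k:ℝ)+1) then ((((k:ℝ)+1)^(d-4+1:ℕ))⁻¹:ℝ) else 0) :=
          (Finset.mul_sum _ _ _).symm
      _ ≤ D d * (((d:ℝ)^(d-4:ℕ) + (2*(d:ℝ))^(d-4:ℕ)) * (M^(d-4:ℕ))⁻¹) :=
          mul_le_mul_of_nonneg_left htail (D_pos hd1).le
  exact master hG0 hg0 hle hA

end Aux

namespace Aux
variable {d : ℕ}

noncomputable def Cd' (d : ℕ) : ℝ := (d:ℝ)^(d-4:ℕ) + (2*(d:ℝ))^(d-4:ℕ)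

noncomputable def C1 (d : ℕ) : ℝ :=
  4*(D d)*2^((d:ℝ)-2) + (D d)*(Cd' d)*2^((d:ℝ)-4)

lemma shift_summable {f : (Fin d → ℤ) → ℝ} (a : Fin d → ℤ) (h : Summable f) :
    Summable (fun z : Fin d → ℤ => f (z - a)) :=
  ((Equiv.subRight a).summable_iff (f := f)).2 h

lemma shift_tsum (f : (Fin d → ℤ) → ℝ) (a : Fin d → ℤ) :
    ∑' z : Fin d → ℤ, f (z - a) = ∑' z : Fin d → ℤ, f z :=
  (Equiv.subRight a).tsum_eq f

lemma rpow_half (s : ℝ) {R : ℝ} (hR : 0 < R) :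
    (R/2)^s = R^s * 2^(-s) := by
  rw [Real.div_rpow hR.le (by norm_num : (0:ℝ) ≤ 2), div_eq_mul_inv,
    ← Real.rpow_neg (by norm_num : (0:ℝ) ≤ 2)]

lemma oneCenter (hd : 7 ≤ d) (a : Fin d → ℤ) {R : ℝ} (hR1 : 1 ≤ R) :
    Summable (fun z : Fin d → ℤ =>
      if euclNorm (z - a) ≤ R/2 then (R/2)^(2-(d:ℝ)) * jap (z-a)^(2-(d:ℝ))
      else jap (z-a)^(2*(2-(d:ℝ)))) ∧
    (∑' z : Fin d → ℤ,
      if euclNorm (z - a) ≤ R/2 then (R/2)^(2-(d:ℝ)) * jap (z-a)^(2-(d:ℝ))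
      else jap (z-a)^(2*(2-(d:ℝ)))) ≤ C1 d * R^(4-(d:ℝ)) := by
  have hd1 : 1 ≤ d := by omega
  have hdR : (7:ℝ) ≤ (d:ℝ) := by exact_mod_cast hd
  have hR0 : (0:ℝ) < R := lt_of_lt_of_le one_pos hR1
  have hM0 : (0:ℝ) < R/2 := by linarith
  set M₁ : ℝ := max (R/2) 1 with hM₁
  have hM₁1 : 1 ≤ M₁ := le_max_right _ _
  have hM₁R : M₁ ≤ R := max_le (by linarith) hR1
  obtain ⟨hs1, ht1⟩ := tsum_trunc (d := d) hd hM₁1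
  obtain ⟨hs2, ht2⟩ := tsum_tail (d := d) hd hM0
  set G₁ : (Fin d → ℤ) → ℝ :=
    fun z => if euclNorm z ≤ M₁ then jap z ^ (2-(d:ℝ)) else 0 with hG₁
  set G₂ : (Fin d → ℤ) → ℝ :=
    fun z => if euclNorm z ≤ R/2 then 0 else jap z ^ (2*(2-(d:ℝ))) with hG₂
  set A : (Fin d → ℤ) → ℝ := fun z =>
    if euclNorm (z - a) ≤ R/2 then (R/2)^(2-(d:ℝ)) * jap (z-a)^(2-(d:ℝ))
    else jap (z-a)^(2*(2-(d:ℝ))) with hA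
  set B : (Fin d → ℤ) → ℝ := fun z =>
    (R/2)^(2-(d:ℝ)) * G₁ (z - a) + G₂ (z - a) with hB
  have hAB : ∀ z, A z ≤ B z := by
    intro z
    rw [hA, hB, hG₁, hG₂]; dsimp only
    split
    · rename_i h
      rw [if_pos (le_trans h (le_max_left _ _))]
      simp
    · rename_i h
      have : 0 ≤ (R/2)^(2-(d:ℝ)) * (if euclNorm (z-a) ≤ M₁ then jap (z-a) ^ (2-(d:ℝ)) else 0) := by
        apply mul_nonneg (by positivity)
        split
        · exact Real.rpow_nonneg (jap_pos _).le _
        · exact le_refl 0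
      linarith
  have hA0 : ∀ z, 0 ≤ A z := by
    intro z
    rw [hA]; dsimp only
    split
    · exact mul_nonneg (by positivity) (Real.rpow_nonneg (jap_pos _).le _)
    · exact Real.rpow_nonneg (jap_pos _).le _
  have hsB : Summable B := by
    apply Summable.add
    · exact (shift_summable a hs1).mul_left _
    · exact shift_summable a hs2
  have hsA : Summable A := Summable.of_nonneg_of_le hA0 hAB hsB
  refine ⟨hsA, ?_⟩
  have htB : ∑' z, B z ≤ (R/2)^(2-(d:ℝ)) * (D d * (4*M₁^2))
      + D d * (Cd' d * ((R/2)^(d-4:ℕ))⁻¹) := by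
    rw [hB]
    rw [Summable.tsum_add ((shift_summable a hs1).mul_left _) (shift_summable a hs2)]
    rw [tsum_mul_left, shift_tsum G₁ a, shift_tsum G₂ a]
    have e2 := mul_le_mul_of_nonneg_left ht1 (le_of_lt (by positivity : (0:ℝ) < (R/2)^(2-(d:ℝ))))
    exact add_le_add e2 ht2
  -- rpow algebra
  have e1 : (R/2)^(2-(d:ℝ)) = R^(2-(d:ℝ)) * 2^((d:ℝ)-2) := by
    rw [rpow_half _ hR0]; congr 2; ring
  have e5 : ((R/2)^(d-4:ℕ))⁻¹ = R^(4-(d:ℝ)) * 2^((d:ℝ)-4) := by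
    have h4 : 4 ≤ d := by omega
    have : ((R/2)^(d-4:ℕ) : ℝ) = (R/2)^(((d-4:ℕ)):ℝ) := (Real.rpow_natCast _ _).symm
    rw [this, ← Real.rpow_neg hM0.le]
    have he : -(((d-4:ℕ)):ℝ) = 4-(d:ℝ) := by
      push_cast [Nat.cast_sub h4]; ring
    rw [he, rpow_half _ hR0]
    congr 2
    ring
  have e4 : R^(2-(d:ℝ)) * R^2 = R^(4-(d:ℝ)) := by
    rw [← Real.rpow_natCast R 2, ← Real.rpow_add hR0]
    congr 1
    push_cast
    ring
  have hM₁sq : M₁^2 ≤ R^2 := by nlinarith [hM₁1, hM₁R, hR0]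
  calc ∑' z, A z ≤ ∑' z, B z := Summable.tsum_le_tsum hAB hsA hsB
    _ ≤ (R/2)^(2-(d:ℝ)) * (D d * (4*M₁^2)) + D d * (Cd' d * ((R/2)^(d-4:ℕ))⁻¹) := htB
    _ ≤ (R/2)^(2-(d:ℝ)) * (D d * (4*R^2)) + D d * (Cd' d * ((R/2)^(d-4:ℕ))⁻¹) := by
        have hpos : (0:ℝ) < (R/2)^(2-(d:ℝ)) := by positivity
        have : D d * (4*M₁^2) ≤ D d * (4*R^2) :=
          mul_le_mul_of_nonneg_left (by linarith) (D_pos hd1).le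
        nlinarith [this, hpos]
    _ = C1 d * R^(4-(d:ℝ)) := by
        rw [e1, e5, C1]
        rw [← e4]
        have hCd'0 : 0 ≤ Cd' d := by rw [Cd']; positivity
        ring
  done

end Aux

namespace Aux
variable {d : ℕ}

lemma twoKernel (hd : 7 ≤ d) (a b : Fin d → ℤ) :
    Summable (fun z : Fin d → ℤ => jap (z-a)^(2-(d:ℝ)) * jap (z-b)^(2-(d:ℝ))) ∧
    (∑' z : Fin d → ℤ, jap (z-a)^(2-(d:ℝ)) * jap (z-b)^(2-(d:ℝ)))
      ≤ (2*C1 d) * jap (a-b)^(4-(d:ℝ)) := by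
  have hdR : (7:ℝ) ≤ (d:ℝ) := by exact_mod_cast hd
  have hs0 : (2-(d:ℝ)) ≤ 0 := by linarith
  set R : ℝ := jap (a-b) with hR
  have hR1 : 1 ≤ R := one_le_jap _
  have hR0 : (0:ℝ) < R := by linarith
  have hM0 : (0:ℝ) < R/2 := by linarith
  obtain ⟨hsa, hta⟩ := oneCenter hd a hR1
  obtain ⟨hsb, htb⟩ := oneCenter hd b hR1
  set Aa : (Fin d → ℤ) → ℝ := fun z =>
    if euclNorm (z - a) ≤ R/2 then (R/2)^(2-(d:ℝ)) * jap (z-a)^(2-(d:ℝ))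
    else jap (z-a)^(2*(2-(d:ℝ))) with hAa
  set Ab : (Fin d → ℤ) → ℝ := fun z =>
    if euclNorm (z - b) ≤ R/2 then (R/2)^(2-(d:ℝ)) * jap (z-b)^(2-(d:ℝ))
    else jap (z-b)^(2*(2-(d:ℝ))) with hAb
  have hAa0 : ∀ z, 0 ≤ Aa z := by
    intro z; rw [hAa]; dsimp only; split
    · exact mul_nonneg (by positivity) (Real.rpow_nonneg (jap_pos _).le _)
    · exact Real.rpow_nonneg (jap_pos _).le _
  have hAb0 : ∀ z, 0 ≤ Ab z := by
    intro z; rw [hAb]; dsimp only; split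
    · exact mul_nonneg (by positivity) (Real.rpow_nonneg (jap_pos _).le _)
    · exact Real.rpow_nonneg (jap_pos _).le _
  have hT0 : ∀ z : Fin d → ℤ, 0 ≤ jap (z-a)^(2-(d:ℝ)) * jap (z-b)^(2-(d:ℝ)) := by
    intro z
    exact mul_nonneg (Real.rpow_nonneg (jap_pos _).le _) (Real.rpow_nonneg (jap_pos _).le _)
  have hTle : ∀ z : Fin d → ℤ,
      jap (z-a)^(2-(d:ℝ)) * jap (z-b)^(2-(d:ℝ)) ≤ Aa z + Ab z := by
    intro z
    have htri : euclNorm (a - b) ≤ euclNorm (z - a) + euclNorm (z - b) := euclNorm_tri a b z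
    by_cases h1 : euclNorm (z - a) ≤ R/2
    · have hjb : R/2 ≤ jap (z-b) := by
        rw [jap] at hR ⊢
        have := euclNorm_nonneg (z - a)
        linarith
      have hKb : jap (z-b)^(2-(d:ℝ)) ≤ (R/2)^(2-(d:ℝ)) :=
        Real.rpow_le_rpow_of_nonpos hM0 hjb hs0
      have hAaz : Aa z = (R/2)^(2-(d:ℝ)) * jap (z-a)^(2-(d:ℝ)) := by
        rw [hAa]; dsimp only; rw [if_pos h1]
      calc jap (z-a)^(2-(d:ℝ)) * jap (z-b)^(2-(d:ℝ))
          ≤ jap (z-a)^(2-(d:ℝ)) * (R/2)^(2-(d:ℝ)) :=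
            mul_le_mul_of_nonneg_left hKb (Real.rpow_nonneg (jap_pos _).le _)
        _ = Aa z := by rw [hAaz]; ring
        _ ≤ Aa z + Ab z := by linarith [hAb0 z]
    · by_cases h2 : euclNorm (z - b) ≤ R/2
      · have hja : R/2 ≤ jap (z-a) := by
          rw [jap] at hR ⊢
          have := euclNorm_nonneg (z - b)
          linarith
        have hKa : jap (z-a)^(2-(d:ℝ)) ≤ (R/2)^(2-(d:ℝ)) :=
          Real.rpow_le_rpow_of_nonpos hM0 hja hs0
        have hAbz : Ab z = (R/2)^(2-(d:ℝ)) * jap (z-b)^(2-(d:ℝ)) := by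
          rw [hAb]; dsimp only; rw [if_pos h2]
        calc jap (z-a)^(2-(d:ℝ)) * jap (z-b)^(2-(d:ℝ))
            ≤ (R/2)^(2-(d:ℝ)) * jap (z-b)^(2-(d:ℝ)) :=
              mul_le_mul_of_nonneg_right hKa (Real.rpow_nonneg (jap_pos _).le _)
          _ = Ab z := hAbz.symm
          _ ≤ Aa z + Ab z := by linarith [hAa0 z]
      · have hAaz : Aa z = jap (z-a)^(2*(2-(d:ℝ))) := by
          rw [hAa]; dsimp only; rw [if_neg h1]
        have hAbz : Ab z = jap (z-b)^(2*(2-(d:ℝ))) := by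
          rw [hAb]; dsimp only; rw [if_neg h2]
        set x : ℝ := jap (z-a)^(2-(d:ℝ)) with hx
        set y : ℝ := jap (z-b)^(2-(d:ℝ)) with hy
        have hxsq : jap (z-a)^(2*(2-(d:ℝ))) = x*x := by
          rw [hx, show 2*(2-(d:ℝ)) = (2-(d:ℝ)) + (2-(d:ℝ)) by ring,
            Real.rpow_add (jap_pos _)]
        have hysq : jap (z-b)^(2*(2-(d:ℝ))) = y*y := by
          rw [hy, show 2*(2-(d:ℝ)) = (2-(d:ℝ)) + (2-(d:ℝ)) by ring,
            Real.rpow_add (jap_pos _)]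
        rw [hAaz, hAbz, hxsq, hysq]
        nlinarith [sq_nonneg (x - y)]
  have hsum : Summable (fun z : Fin d → ℤ => Aa z + Ab z) := hsa.add hsb
  have hsT : Summable (fun z : Fin d → ℤ => jap (z-a)^(2-(d:ℝ)) * jap (z-b)^(2-(d:ℝ))) :=
    Summable.of_nonneg_of_le hT0 hTle hsum
  refine ⟨hsT, ?_⟩
  calc (∑' z : Fin d → ℤ, jap (z-a)^(2-(d:ℝ)) * jap (z-b)^(2-(d:ℝ)))
      ≤ ∑' z : Fin d → ℤ, (Aa z + Ab z) := Summable.tsum_le_tsum hTle hsT hsum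
    _ = (∑' z, Aa z) + (∑' z, Ab z) := Summable.tsum_add hsa hsb
    _ ≤ C1 d * R^(4-(d:ℝ)) + C1 d * R^(4-(d:ℝ)) := add_le_add hta htb
    _ = (2*C1 d) * jap (a-b)^(4-(d:ℝ)) := by rw [← hR]; ring

end Aux

theorem stmt8 (d : ℕ) (hd : 7 ≤ d) :
    ∃ C : ℝ, 0 < C ∧
      ∀ N : ℝ, 1 ≤ N →
        ∀ v₁ v₂ w : Fin d → ℤ, N ≤ euclNorm (v₂ - w) →
          Summable (fun z : Fin d → ℤ =>
              jap (z - v₁) ^ (2 - (d : ℝ)) * jap (z - v₂) ^ (2 - (d : ℝ)) *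
                jap (z - w) ^ (2 - (d : ℝ))) ∧
            (∑' z : Fin d → ℤ,
                jap (z - v₁) ^ (2 - (d : ℝ)) * jap (z - v₂) ^ (2 - (d : ℝ)) *
                  jap (z - w) ^ (2 - (d : ℝ))) ≤
              C * N ^ (2 - (d : ℝ)) *
                (jap (v₁ - w) ^ (4 - (d : ℝ)) + jap (v₁ - v₂) ^ (4 - (d : ℝ))) := by
  have hd1 : 1 ≤ d := by omega
  have hdR : (7:ℝ) ≤ (d:ℝ) := by exact_mod_cast hd
  have hs0 : (2-(d:ℝ)) ≤ 0 := by linarith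
  have hC1 : 0 < Aux.C1 d := by
    rw [Aux.C1]
    have hD := Aux.D_pos (d := d) hd1
    have hCd' : 0 < Aux.Cd' d := by
      rw [Aux.Cd']
      have : (0:ℝ) < (d:ℝ) := by linarith
      positivity
    have h1 : (0:ℝ) < 2^((d:ℝ)-2) := Real.rpow_pos_of_pos two_pos _
    have h2 : (0:ℝ) < 2^((d:ℝ)-4) := Real.rpow_pos_of_pos two_pos _
    have t1 : (0:ℝ) < 4*(Aux.D d)*2^((d:ℝ)-2) :=
      mul_pos (mul_pos (by norm_num) hD) h1
    have t2 : (0:ℝ) < (Aux.D d)*(Aux.Cd' d)*2^((d:ℝ)-4) :=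
      mul_pos (mul_pos hD hCd') h2
    linarith
  refine ⟨2^((d:ℝ)-2) * (2*Aux.C1 d), by positivity, ?_⟩
  intro N hN v₁ v₂ w hNvw
  have hN0 : (0:ℝ) < N := lt_of_lt_of_le one_pos hN
  have hN20 : (0:ℝ) < N/2 := by linarith
  obtain ⟨hs12, ht12⟩ := Aux.twoKernel hd v₁ v₂
  obtain ⟨hs13, ht13⟩ := Aux.twoKernel hd v₁ w
  set F : (Fin d → ℤ) → ℝ := fun z =>
    jap (z - v₁) ^ (2 - (d : ℝ)) * jap (z - v₂) ^ (2 - (d : ℝ)) *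
      jap (z - w) ^ (2 - (d : ℝ)) with hF
  set G : (Fin d → ℤ) → ℝ := fun z =>
    (N/2)^(2-(d:ℝ)) * (jap (z - v₁) ^ (2 - (d : ℝ)) * jap (z - v₂) ^ (2 - (d : ℝ))
      + jap (z - v₁) ^ (2 - (d : ℝ)) * jap (z - w) ^ (2 - (d : ℝ))) with hG
  have hF0 : ∀ z, 0 ≤ F z := by
    intro z
    rw [hF]
    exact mul_nonneg (mul_nonneg (Real.rpow_nonneg (Aux.jap_pos _).le _)
      (Real.rpow_nonneg (Aux.jap_pos _).le _)) (Real.rpow_nonneg (Aux.jap_pos _).le _)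
  have hFG : ∀ z, F z ≤ G z := by
    intro z
    have htri : euclNorm (v₂ - w) ≤ euclNorm (z - v₂) + euclNorm (z - w) :=
      Aux.euclNorm_tri v₂ w z
    have hsum2 : N ≤ jap (z - v₂) + jap (z - w) := by
      rw [jap, jap]
      linarith
    have k1 := Real.rpow_nonneg (Aux.jap_pos (z - v₁)).le (2-(d:ℝ))
    have k2 := Real.rpow_nonneg (Aux.jap_pos (z - v₂)).le (2-(d:ℝ))
    have k3 := Real.rpow_nonneg (Aux.jap_pos (z - w)).le (2-(d:ℝ))
    rw [hF, hG]
    dsimp only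
    by_cases hc : N/2 ≤ jap (z - v₂)
    · have hK2 : jap (z - v₂) ^ (2-(d:ℝ)) ≤ (N/2)^(2-(d:ℝ)) :=
        Real.rpow_le_rpow_of_nonpos hN20 hc hs0
      have step : jap (z - v₁) ^ (2 - (d : ℝ)) * jap (z - v₂) ^ (2 - (d : ℝ)) *
          jap (z - w) ^ (2 - (d : ℝ)) ≤
          (N/2)^(2-(d:ℝ)) * (jap (z - v₁) ^ (2 - (d : ℝ)) * jap (z - w) ^ (2 - (d : ℝ))) := by
        nlinarith [mul_nonneg k1 k3]
      nlinarith [mul_nonneg k1 k2, Real.rpow_nonneg hN20.le (2-(d:ℝ))]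
    · push_neg at hc
      have hc3 : N/2 ≤ jap (z - w) := by linarith
      have hK3 : jap (z - w) ^ (2-(d:ℝ)) ≤ (N/2)^(2-(d:ℝ)) :=
        Real.rpow_le_rpow_of_nonpos hN20 hc3 hs0
      have step : jap (z - v₁) ^ (2 - (d : ℝ)) * jap (z - v₂) ^ (2 - (d : ℝ)) *
          jap (z - w) ^ (2 - (d : ℝ)) ≤
          (N/2)^(2-(d:ℝ)) * (jap (z - v₁) ^ (2 - (d : ℝ)) * jap (z - v₂) ^ (2 - (d : ℝ))) := by
        nlinarith [mul_nonneg k1 k2]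
      nlinarith [mul_nonneg k1 k3, Real.rpow_nonneg hN20.le (2-(d:ℝ))]
  have hsG : Summable G := by
    rw [hG]
    exact ((hs12.add hs13)).mul_left _
  have hsF : Summable F := Summable.of_nonneg_of_le hF0 hFG hsG
  refine ⟨hsF, ?_⟩
  have hNhalf : (N/2)^(2-(d:ℝ)) = N^(2-(d:ℝ)) * 2^((d:ℝ)-2) := by
    rw [Aux.rpow_half _ hN0]; congr 2; ring
  have htG : ∑' z, G z ≤ (N/2)^(2-(d:ℝ)) *
      ((2*Aux.C1 d) * jap (v₁-v₂)^(4-(d:ℝ)) + (2*Aux.C1 d) * jap (v₁-w)^(4-(d:ℝ))) := by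
    rw [hG, tsum_mul_left, Summable.tsum_add hs12 hs13]
    apply mul_le_mul_of_nonneg_left (add_le_add ht12 ht13) (Real.rpow_nonneg hN20.le _)
  calc ∑' z, F z ≤ ∑' z, G z := Summable.tsum_le_tsum hFG hsF hsG
    _ ≤ (N/2)^(2-(d:ℝ)) *
        ((2*Aux.C1 d) * jap (v₁-v₂)^(4-(d:ℝ)) + (2*Aux.C1 d) * jap (v₁-w)^(4-(d:ℝ))) := htG
    _ = 2^((d:ℝ)-2) * (2*Aux.C1 d) * N ^ (2 - (d : ℝ)) *
        (jap (v₁ - w) ^ (4 - (d : ℝ)) + jap (v₁ - v₂) ^ (4 - (d : ℝ))) := by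
      rw [hNhalf]; ring
end

section
/- Let d ≥ 3 be an integer. There exists a constant C = C(d) > 0 such that for every real m ≥ 1 and all y, z ∈ ℤ^d: ∑_{z' ∈ ∂B_y(m)} ⟨z−z'⟩^(2−d) ≤ C · m. -/
open Finset

lemma euclNorm_nonneg {d : ℕ} (x : Fin d → ℤ) : 0 ≤ euclNorm x := Real.sqrt_nonneg _

lemma coord_le_euclNorm {d : ℕ} (x : Fin d → ℤ) (i : Fin d) :
    ((x i).natAbs : ℝ) ≤ euclNorm x := by
  have h1 : ((x i : ℝ)) ^ 2 ≤ ∑ k, ((x k : ℝ)) ^ 2 :=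
    Finset.single_le_sum (f := fun k => ((x k : ℝ)) ^ 2) (fun k _ => sq_nonneg _) (mem_univ i)
  have h2 := Real.sqrt_le_sqrt h1
  rw [Real.sqrt_sq_eq_abs] at h2
  refine le_trans (le_of_eq ?_) h2
  rw [Nat.cast_natAbs]
  push_cast
  rfl

lemma face_bound (d : ℕ) (hd : 3 ≤ d) (z lo hi : Fin d → ℤ) (j : Fin d) (c : ℤ) (K : ℕ)
    (hK : ∀ i, hi i - lo i ≤ (K : ℤ))
    (S : Finset (Fin d → ℤ))
    (hS : ∀ x ∈ S, x j = c ∧ ∀ i, lo i ≤ x i ∧ x i ≤ hi i) :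
    ∑ x ∈ S, jap (z - x) ^ (2 - (d : ℝ)) ≤ (2 * d * 3 ^ d : ℝ) * (K + 1) := by
  classical
  set g : (Fin d → ℤ) → ℕ := fun x => (univ.erase j).sup (fun i => (z i - x i).natAbs) with hg
  have hne : (univ.erase j).Nonempty := by
    rw [← Finset.card_pos, Finset.card_erase_of_mem (mem_univ j), Finset.card_univ,
      Fintype.card_fin]
    omega
  have hexp : 2 - (d : ℝ) ≤ 0 := by
    have : (3 : ℝ) ≤ (d : ℝ) := by exact_mod_cast hd
    linarith
  -- pointwise bound
  have hpt : ∀ x : Fin d → ℤ, jap (z - x) ^ (2 - (d : ℝ)) ≤ ((g x : ℝ) + 1) ^ (2 - (d : ℝ)) := by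
    intro x
    apply Real.rpow_le_rpow_of_nonpos (by positivity) ?_ hexp
    obtain ⟨i, hi, hval⟩ := Finset.exists_mem_eq_sup (univ.erase j) hne
      (fun i => (z i - x i).natAbs)
    have h5 : ((g x : ℕ) : ℝ) ≤ euclNorm (z - x) := by
      have hgx : g x = ((z - x) i).natAbs := by
        rw [hg]; simpa using hval
      rw [hgx]
      exact coord_le_euclNorm (z - x) i
    unfold jap
    linarith
  -- clamp point
  set x₀ : Fin d → ℤ := fun i => max (lo i) (min (z i) (hi i)) with hx₀
  set L0 : ℕ := g x₀ with hL0
  have hmaps : ∀ x ∈ S, g x ∈ Finset.Icc L0 (L0 + K) := by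
    intro x hx
    obtain ⟨-, hcoord⟩ := hS x hx
    rw [Finset.mem_Icc]
    constructor
    · apply Finset.sup_mono_fun
      intro i _
      have h1 := (hcoord i).1
      have h2 := (hcoord i).2
      simp only [hx₀]
      omega
    · apply Finset.sup_le
      intro i hi
      have h1 := (hcoord i).1
      have h2 := (hcoord i).2
      have h3 := hK i
      have h4 : (z i - x₀ i).natAbs ≤ L0 :=
        Finset.le_sup (f := fun i => (z i - x₀ i).natAbs) hi
      simp only [hx₀] at h4 ⊢
      omega
  -- fiber cardinality bound
  have hcard : ∀ L : ℕ,
      (S.filter (fun x => g x = L)).card ≤ 2 * d * 3 ^ (d - 2) * (L + 1) ^ (d - 2) := by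
    intro L
    set T : Fin d → Fin d → Finset ℤ := fun i₀ i =>
      if i = j then {c} else if i = i₀ then {z i - L, z i + L} else Finset.Icc (z i - L) (z i + L)
      with hT
    have hsub : S.filter (fun x => g x = L) ⊆
        (univ.erase j).biUnion (fun i₀ => Fintype.piFinset (T i₀)) := by
      intro x hx
      rw [Finset.mem_filter] at hx
      obtain ⟨hxS, hgx⟩ := hx
      obtain ⟨i₀, hi₀, hval⟩ := Finset.exists_mem_eq_sup (univ.erase j) hne
        (fun i => (z i - x i).natAbs)
      rw [Finset.mem_biUnion]
      refine ⟨i₀, hi₀, ?_⟩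
      rw [Fintype.mem_piFinset]
      intro i
      have hij : i₀ ≠ j := (Finset.mem_erase.mp hi₀).1
      by_cases h1 : i = j
      · subst h1
        simp only [hT, if_pos rfl]
        simp [(hS x hxS).1]
      · by_cases h2 : i = i₀
        · subst h2
          have hLv : (z i - x i).natAbs = L := by
            rw [← hval]; exact hgx
          simp only [hT, if_neg h1, if_pos rfl, if_true, ite_true, eq_self_iff_true,
            Finset.mem_insert, Finset.mem_singleton]
          omega
        · have hmem : i ∈ univ.erase j := Finset.mem_erase.mpr ⟨h1, mem_univ i⟩
          have hle : (z i - x i).natAbs ≤ L := by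
            rw [← hgx]
            exact Finset.le_sup (f := fun i => (z i - x i).natAbs) hmem
          simp only [hT, if_neg h1, if_neg h2, Finset.mem_Icc]
          omega
    calc (S.filter (fun x => g x = L)).card
        ≤ ((univ.erase j).biUnion (fun i₀ => Fintype.piFinset (T i₀))).card :=
          Finset.card_le_card hsub
      _ ≤ ∑ i₀ ∈ univ.erase j, (Fintype.piFinset (T i₀)).card := Finset.card_biUnion_le
      _ ≤ ∑ i₀ ∈ univ.erase j, 2 * (2 * L + 1) ^ (d - 2) := by
          apply Finset.sum_le_sum
          intro i₀ hi₀
          have hij : i₀ ≠ j := (Finset.mem_erase.mp hi₀).1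
          rw [Fintype.card_piFinset]
          rw [← Finset.mul_prod_erase univ _ (mem_univ j)]
          rw [← Finset.mul_prod_erase (univ.erase j) _ hi₀]
          have e1 : (T i₀ j).card = 1 := by simp [hT]
          have e2 : (T i₀ i₀).card ≤ 2 := by
            simp only [hT, if_neg hij, if_pos rfl]
            exact (Finset.card_insert_le _ _).trans (by simp)
          have e3 : ∏ i ∈ (univ.erase j).erase i₀, (T i₀ i).card = (2 * L + 1) ^ (d - 2) := by
            have hconst : ∀ i ∈ (univ.erase j).erase i₀, (T i₀ i).card = 2 * L + 1 := by
              intro i hi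
              obtain ⟨hii₀, hmem⟩ := Finset.mem_erase.mp hi
              obtain ⟨hijj, -⟩ := Finset.mem_erase.mp hmem
              simp only [hT, if_neg hijj, if_neg hii₀]
              rw [Int.card_Icc]
              omega
            rw [Finset.prod_congr rfl hconst, Finset.prod_const,
              Finset.card_erase_of_mem hi₀, Finset.card_erase_of_mem (mem_univ j),
              Finset.card_univ, Fintype.card_fin]
            congr 1
          rw [e1, e3, one_mul]
          exact Nat.mul_le_mul_right _ e2
      _ ≤ (d - 1) * (2 * (2 * L + 1) ^ (d - 2)) := by
          rw [Finset.sum_const, Finset.card_erase_of_mem (mem_univ j), Finset.card_univ,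
            Fintype.card_fin, smul_eq_mul]
      _ ≤ 2 * d * 3 ^ (d - 2) * (L + 1) ^ (d - 2) := by
          have h1 : (2 * L + 1) ^ (d - 2) ≤ 3 ^ (d - 2) * (L + 1) ^ (d - 2) := by
            rw [← mul_pow]
            exact Nat.pow_le_pow_left (by omega) _
          calc (d - 1) * (2 * (2 * L + 1) ^ (d - 2))
              ≤ d * (2 * (3 ^ (d - 2) * (L + 1) ^ (d - 2))) :=
                Nat.mul_le_mul (by omega) (Nat.mul_le_mul_left _ h1)
            _ = 2 * d * 3 ^ (d - 2) * (L + 1) ^ (d - 2) := by ring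
  -- rpow cancellation
  have hcancel : ∀ L : ℕ, (((L : ℝ) + 1) ^ (d - 2 : ℕ)) * ((L : ℝ) + 1) ^ (2 - (d : ℝ)) = 1 := by
    intro L
    have hpos : (0 : ℝ) < (L : ℝ) + 1 := by positivity
    rw [← Real.rpow_natCast ((L : ℝ) + 1) (d - 2), ← Real.rpow_add hpos]
    have hz : ((d - 2 : ℕ) : ℝ) + (2 - (d : ℝ)) = 0 := by
      rw [Nat.cast_sub (by omega : 2 ≤ d)]
      push_cast
      ring
    rw [hz, Real.rpow_zero]
  -- inner sum bound
  have hinner : ∀ L ∈ Finset.Icc L0 (L0 + K),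
      ∑ x ∈ S.filter (fun x => g x = L), ((g x : ℝ) + 1) ^ (2 - (d : ℝ))
        ≤ (2 * d * 3 ^ d : ℝ) := by
    intro L _
    have step1 : ∑ x ∈ S.filter (fun x => g x = L), ((g x : ℝ) + 1) ^ (2 - (d : ℝ))
        = (S.filter (fun x => g x = L)).card * (((L : ℝ) + 1) ^ (2 - (d : ℝ))) := by
      rw [Finset.sum_congr rfl (fun x hx => by
        rw [(Finset.mem_filter.mp hx).2]), Finset.sum_const, nsmul_eq_mul]
    rw [step1]
    have hrnn : (0 : ℝ) ≤ ((L : ℝ) + 1) ^ (2 - (d : ℝ)) := Real.rpow_nonneg (by positivity) _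
    calc ((S.filter (fun x => g x = L)).card : ℝ) * (((L : ℝ) + 1) ^ (2 - (d : ℝ)))
        ≤ ((2 * d * 3 ^ (d - 2) * (L + 1) ^ (d - 2) : ℕ) : ℝ) * (((L : ℝ) + 1) ^ (2 - (d : ℝ))) :=
          mul_le_mul_of_nonneg_right (by exact_mod_cast hcard L) hrnn
      _ = (2 * d * 3 ^ (d - 2) : ℝ) * ((((L : ℝ) + 1) ^ (d - 2 : ℕ)) * ((L : ℝ) + 1) ^ (2 - (d : ℝ))) := by
          push_cast
          ring
      _ = (2 * d * 3 ^ (d - 2) : ℝ) := by rw [hcancel L, mul_one]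
      _ ≤ (2 * d * 3 ^ d : ℝ) := by
          have h3 : (3 : ℝ) ^ (d - 2 : ℕ) ≤ 3 ^ d :=
            pow_le_pow_right₀ (by norm_num) (by omega)
          have hd0 : (0 : ℝ) ≤ 2 * d := by positivity
          exact mul_le_mul_of_nonneg_left h3 hd0
  -- assemble
  calc ∑ x ∈ S, jap (z - x) ^ (2 - (d : ℝ))
      ≤ ∑ x ∈ S, ((g x : ℝ) + 1) ^ (2 - (d : ℝ)) := Finset.sum_le_sum (fun x _ => hpt x)
    _ = ∑ L ∈ Finset.Icc L0 (L0 + K), ∑ x ∈ S.filter (fun x => g x = L),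
          ((g x : ℝ) + 1) ^ (2 - (d : ℝ)) :=
        (Finset.sum_fiberwise_of_maps_to hmaps _).symm
    _ ≤ ∑ L ∈ Finset.Icc L0 (L0 + K), (2 * d * 3 ^ d : ℝ) := Finset.sum_le_sum hinner
    _ = (2 * d * 3 ^ d : ℝ) * (K + 1) := by
        rw [Finset.sum_const, Nat.card_Icc, nsmul_eq_mul]
        have hc : L0 + K + 1 - L0 = K + 1 := by omega
        rw [hc]
        push_cast
        ring

lemma sum_biUnion_le'' {ι α : Type*} [DecidableEq α] (s : Finset ι) (t : ι → Finset α)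
    (f : α → ℝ) (hf : ∀ a, 0 ≤ f a) :
    ∑ x ∈ s.biUnion t, f x ≤ ∑ i ∈ s, ∑ x ∈ t i, f x := by
  classical
  induction s using Finset.induction with
  | empty => simp
  | insert a s ha ih =>
    rw [Finset.biUnion_insert, Finset.sum_insert ha]
    calc ∑ x ∈ t a ∪ s.biUnion t, f x ≤ ∑ x ∈ t a, f x + ∑ x ∈ s.biUnion t, f x := by
          have h1 := Finset.sum_union_inter (s₁ := t a) (s₂ := s.biUnion t) (f := f)
          have h2 : 0 ≤ ∑ x ∈ t a ∩ s.biUnion t, f x := Finset.sum_nonneg fun x _ => hf x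
          linarith
      _ ≤ _ := by linarith [ih]


theorem stmt10 (d : ℕ) (hd : 3 ≤ d) :
    ∃ C : ℝ, 0 < C ∧
      ∀ m : ℝ, 1 ≤ m →
        ∀ y z : Fin d → ℤ,
          (∑' z' : ↥(latBdry y m), jap (z - (z' : Fin d → ℤ)) ^ (2 - (d : ℝ))) ≤ C * m := by
  classical
  have hd0 : 0 < d := by omega
  have hdR : (0 : ℝ) < d := by exact_mod_cast hd0
  refine ⟨(2 * d) * ((2 * d * 3 ^ d) * 3), by positivity, ?_⟩
  intro m hm y z
  set M : ℕ := ⌊m⌋₊ with hMdef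
  have hm0 : (0 : ℝ) ≤ m := le_trans zero_le_one hm
  have hMle : (M : ℝ) ≤ m := Nat.floor_le hm0
  have hM1 : 1 ≤ M := Nat.le_floor (by exact_mod_cast hm)
  have hboxmem : ∀ x : Fin d → ℤ, x ∈ latBox y m ↔ ∀ i, (x i - y i).natAbs ≤ M := by
    intro x
    unfold latBox supNorm
    simp only [Set.mem_setOf_eq]
    constructor
    · intro h i
      have h2 : (Finset.univ.sup fun i => ((x - y) i).natAbs) ≤ M := Nat.le_floor h
      have h3 := Finset.le_sup (f := fun i => ((x - y) i).natAbs) (mem_univ i)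
      simpa using le_trans h3 h2
    · intro h
      have h2 : (Finset.univ.sup fun i => ((x - y) i).natAbs) ≤ M :=
        Finset.sup_le (fun i _ => by simpa using h i)
      calc ((Finset.univ.sup fun i => ((x - y) i).natAbs : ℕ) : ℝ) ≤ (M : ℝ) := by
            exact_mod_cast h2
        _ ≤ m := hMle
  set Box : Finset (Fin d → ℤ) := Fintype.piFinset (fun i => Finset.Icc (y i - M) (y i + M))
    with hBox
  have hmemBox : ∀ x, x ∈ Box ↔ ∀ i, (x i - y i).natAbs ≤ M := by
    intro x
    rw [hBox, Fintype.mem_piFinset]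
    apply forall_congr'
    intro i
    rw [Finset.mem_Icc]
    omega
  set B : Finset (Fin d → ℤ) := Box.filter (fun x => x ∈ latBdry y m) with hB
  have hBdryEq : latBdry y m = ↑B := by
    ext x
    rw [hB, Finset.coe_filter, Set.mem_setOf_eq]
    constructor
    · intro hx
      exact ⟨(hmemBox x).mpr ((hboxmem x).mp hx.1), hx⟩
    · exact fun hx => hx.2
  rw [hBdryEq, Finset.tsum_subtype' B (fun x => jap (z - x) ^ (2 - (d : ℝ)))]
  set face : Fin d × Bool → Finset (Fin d → ℤ) := fun p =>
    Box.filter (fun x => x p.1 = y p.1 + (if p.2 then (M : ℤ) else -(M : ℤ))) with hface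
  have hBsub : B ⊆ Finset.univ.biUnion face := by
    intro x hx
    rw [hB, Finset.mem_filter] at hx
    obtain ⟨hxBox, hxIn, x', hx'out, hsum⟩ := hx
    have hnall : ¬ ∀ i, (x' i - y i).natAbs ≤ M := fun h => hx'out ((hboxmem x').mpr h)
    push_neg at hnall
    obtain ⟨j, hj⟩ := hnall
    have h1 : |x j - x' j| ≤ 1 := by
      rw [← hsum]
      exact Finset.single_le_sum (f := fun i => |x i - x' i|) (fun i _ => abs_nonneg _)
        (mem_univ j)
    have h1' : (x j - x' j).natAbs ≤ 1 := by
      rw [Int.abs_eq_natAbs] at h1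
      exact_mod_cast h1
    have h2 : (x j - y j).natAbs ≤ M := (hboxmem x).mp hxIn j
    rw [Finset.mem_biUnion]
    have hcases : x j = y j + M ∨ x j = y j - M := by omega
    rcases hcases with h | h
    · refine ⟨(j, true), mem_univ _, ?_⟩
      rw [hface, Finset.mem_filter]
      exact ⟨hxBox, by simp [h]⟩
    · refine ⟨(j, false), mem_univ _, ?_⟩
      rw [hface, Finset.mem_filter]
      exact ⟨hxBox, by simp [h, sub_eq_add_neg]⟩
  have hnn : ∀ x : Fin d → ℤ, 0 ≤ jap (z - x) ^ (2 - (d : ℝ)) := by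
    intro x
    apply Real.rpow_nonneg
    unfold jap
    have := euclNorm_nonneg (z - x)
    linarith
  have hfacebound : ∀ p : Fin d × Bool,
      ∑ x ∈ face p, jap (z - x) ^ (2 - (d : ℝ)) ≤ (2 * d * 3 ^ d : ℝ) * ((2 * M : ℕ) + 1) := by
    intro p
    apply face_bound d hd z (fun i => y i - M) (fun i => y i + M) p.1
      (y p.1 + (if p.2 then (M : ℤ) else -(M : ℤ))) (2 * M)
    · intro i
      push_cast
      ring_nf
      omega
    · intro x hx
      rw [hface, Finset.mem_filter] at hx
      obtain ⟨hxBox, hxc⟩ := hx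
      refine ⟨hxc, fun i => ?_⟩
      have := (hmemBox x).mp hxBox i
      omega
  calc ∑ x ∈ B, jap (z - x) ^ (2 - (d : ℝ))
      ≤ ∑ x ∈ Finset.univ.biUnion face, jap (z - x) ^ (2 - (d : ℝ)) :=
        Finset.sum_le_sum_of_subset_of_nonneg hBsub (fun x _ _ => hnn x)
    _ ≤ ∑ p : Fin d × Bool, ∑ x ∈ face p, jap (z - x) ^ (2 - (d : ℝ)) :=
        sum_biUnion_le'' _ _ _ hnn
    _ ≤ ∑ p : Fin d × Bool, (2 * d * 3 ^ d : ℝ) * ((2 * M : ℕ) + 1) :=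
        Finset.sum_le_sum (fun p _ => hfacebound p)
    _ = (2 * d : ℝ) * ((2 * d * 3 ^ d : ℝ) * ((2 * M : ℕ) + 1)) := by
        rw [Finset.sum_const, Finset.card_univ, Fintype.card_prod, Fintype.card_fin,
          Fintype.card_bool, nsmul_eq_mul]
        push_cast
        ring
    _ ≤ (2 * d) * ((2 * d * 3 ^ d) * 3) * m := by
        have h2M : ((2 * M : ℕ) : ℝ) + 1 ≤ 3 * m := by
          push_cast
          linarith
        have hA : (0 : ℝ) ≤ 2 * d := by positivity
        have hB2 : (0 : ℝ) ≤ 2 * d * 3 ^ d := by positivity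
        calc (2 * (d : ℝ)) * ((2 * d * 3 ^ d) * (((2 * M : ℕ) : ℝ) + 1))
            ≤ (2 * d) * ((2 * d * 3 ^ d) * (3 * m)) := by
              apply mul_le_mul_of_nonneg_left _ hA
              exact mul_le_mul_of_nonneg_left h2M hB2
          _ = (2 * d) * ((2 * d * 3 ^ d) * 3) * m := by ring
end
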